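/- arXiv:2208.11154 — 3 statements merged into one kernel-verified Lean document; each statement's English description precedes it below -/
import Mathlib

section
/- The function v : ℂ → ℝ defined by v(x + iy) = max{exp(πx)·cos(πy) − 1, 0} if x > 0 and |y| < 1/2, and v(x + iy) = 0 otherwise, is subharmonic on ℂ. -/
open Real Complex

/-- A function `u : ℂ → ℝ` is subharmonic if it is upper semicontinuous and satisfies
the sub-mean value inequality on every disc. -/
def Subharmonic (u : ℂ → ℝ) : Prop :=
  UpperSemicontinuous u ∧
    ∀ z : ℂ, ∀ r : ℝ, 0 < r →
      u z ≤ (1 / (2 * Real.pi)) *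
        ∫ t in (0 : ℝ)..(2 * Real.pi), u (z + r * Complex.exp (Complex.I * t))

noncomputable def vfun (z : ℂ) : ℝ :=
  if 0 < z.re ∧ |z.im| < 1 / 2 then
    max (Real.exp (Real.pi * z.re) * Real.cos (Real.pi * z.im) - 1) 0
  else 0

open MeasureTheory intervalIntegral Metric Set Filter
open scoped Interval

namespace SubhAux

lemma abs_sin_le_aux {x : ℝ} (h : 0 ≤ x) : |Real.sin x| ≤ x := by
  rcases le_total x 1 with h1 | h1
  · have hs : 0 ≤ Real.sin x :=
      Real.sin_nonneg_of_nonneg_of_le_pi h (by linarith [Real.pi_gt_three])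
    rw [_root_.abs_of_nonneg hs]; exact Real.sin_le h
  · exact le_trans (Real.abs_sin_le_one x) h1

lemma abs_sin_le (x : ℝ) : |Real.sin x| ≤ |x| := by
  rcases le_total 0 x with h | h
  · rw [_root_.abs_of_nonneg h]; exact abs_sin_le_aux h
  · rw [_root_.abs_of_nonpos h, ← _root_.abs_neg, ← Real.sin_neg]
    exact abs_sin_le_aux (by linarith)

lemma cos_lip (a b : ℝ) : |Real.cos a - Real.cos b| ≤ |a - b| := by
  rw [Real.cos_sub_cos]
  have h2 := abs_sin_le ((a - b) / 2)
  have h3 := Real.abs_sin_le_one ((a + b) / 2)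
  calc |(-2) * Real.sin ((a+b)/2) * Real.sin ((a-b)/2)|
      = 2 * |Real.sin ((a+b)/2)| * |Real.sin ((a-b)/2)| := by
        rw [_root_.abs_mul, _root_.abs_mul]; norm_num
    _ ≤ 2 * 1 * |(a-b)/2| := by
        apply mul_le_mul _ h2 (_root_.abs_nonneg _) (by positivity)
        nlinarith [_root_.abs_nonneg (Real.sin ((a+b)/2))]
    _ = |a - b| := by rw [_root_.abs_div]; norm_num; ring

noncomputable def c (s : ℝ) : ℝ :=
  max (min (Real.cos (Real.pi * s)) (Real.pi * (1/2 - |s|))) 0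

lemma c_nonneg (s : ℝ) : 0 ≤ c s := le_max_right _ _

lemma c_le_one (s : ℝ) : c s ≤ 1 :=
  max_le (le_trans (min_le_left _ _) (Real.cos_le_one _)) zero_le_one

lemma c_eq_cos {s : ℝ} (h : |s| ≤ 1/2) : c s = Real.cos (Real.pi * s) := by
  have habs : |Real.pi * s| = Real.pi * |s| := by
    rw [_root_.abs_mul, _root_.abs_of_nonneg Real.pi_pos.le]
  have hle : Real.pi * |s| ≤ Real.pi / 2 := by
    nlinarith [Real.pi_pos, _root_.abs_nonneg s]
  have hmin : Real.cos (Real.pi * s) ≤ Real.pi * (1/2 - |s|) := by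
    have he : Real.cos (Real.pi * s) = Real.sin (Real.pi/2 - Real.pi * |s|) := by
      rw [Real.sin_pi_div_two_sub, ← Real.cos_abs, habs]
    rw [he]
    have := Real.sin_le (x := Real.pi/2 - Real.pi * |s|) (by linarith [_root_.abs_nonneg s])
    linarith
  have hpos : 0 ≤ Real.cos (Real.pi * s) := by
    apply Real.cos_nonneg_of_mem_Icc
    have h2 : |Real.pi * s| ≤ Real.pi / 2 := by rw [habs]; exact hle
    obtain ⟨ha, hb⟩ := _root_.abs_le.1 h2
    exact ⟨ha, hb⟩
  simp only [c]
  rw [min_eq_left hmin, max_eq_left hpos]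

lemma c_eq_zero {s : ℝ} (h : 1/2 ≤ |s|) : c s = 0 := by
  apply max_eq_right
  apply le_trans (min_le_right _ _)
  nlinarith [Real.pi_pos]

lemma c_lip (a b : ℝ) : |c a - c b| ≤ Real.pi * |a - b| := by
  have h0 : |c a - c b| ≤ max |min (Real.cos (Real.pi * a)) (Real.pi * (1/2 - |a|)) -
      min (Real.cos (Real.pi * b)) (Real.pi * (1/2 - |b|))| |(0:ℝ) - 0| :=
    abs_max_sub_max_le_max _ _ _ _
  have h1 : |Real.cos (Real.pi * a) - Real.cos (Real.pi * b)| ≤ Real.pi * |a - b| := by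
    calc |Real.cos (Real.pi * a) - Real.cos (Real.pi * b)| ≤ |Real.pi * a - Real.pi * b| :=
          cos_lip _ _
      _ = Real.pi * |a - b| := by
          rw [← mul_sub, _root_.abs_mul, _root_.abs_of_nonneg Real.pi_pos.le]
  have h2 : |Real.pi * (1/2 - |a|) - Real.pi * (1/2 - |b|)| ≤ Real.pi * |a - b| := by
    rw [← mul_sub, _root_.abs_mul, _root_.abs_of_nonneg Real.pi_pos.le]
    have he : (1/2 - |a| - (1/2 - |b|)) = (_root_.abs b - _root_.abs a) := by ring
    rw [he]
    refine mul_le_mul_of_nonneg_left ?_ Real.pi_pos.le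
    rw [_root_.abs_sub_comm]
    exact _root_.abs_abs_sub_abs_le_abs_sub a b
  have h3 := abs_min_sub_min_le_max (Real.cos (Real.pi * a)) (Real.pi * (1/2 - |a|))
    (Real.cos (Real.pi * b)) (Real.pi * (1/2 - |b|))
  have hz : |(0:ℝ) - 0| = 0 := by simp
  rw [hz] at h0
  calc |c a - c b| ≤ _ := h0
    _ ≤ Real.pi * |a - b| := by
        apply max_le _ (by positivity)
        exact le_trans h3 (max_le h1 h2)

lemma c_cont : Continuous c := by
  apply Continuous.max _ continuous_const
  apply Continuous.min
  · exact Real.continuous_cos.comp (continuous_const.mul continuous_id)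
  · exact continuous_const.mul (continuous_const.sub _root_.continuous_abs)

lemma exp_lip {a b C : ℝ} (ha : a ≤ C) (hb : b ≤ C) :
    |Real.exp a - Real.exp b| ≤ Real.exp C * |a - b| := by
  wlog hab : b ≤ a generalizing a b
  · rw [_root_.abs_sub_comm, _root_.abs_sub_comm a b]; exact this hb ha (by linarith)
  rw [_root_.abs_of_nonneg (by linarith [Real.exp_le_exp.2 hab] : (0:ℝ) ≤ Real.exp a - Real.exp b),
    _root_.abs_of_nonneg (by linarith : (0:ℝ) ≤ a - b)]
  have h1 : (b - a) + 1 ≤ Real.exp (b - a) := Real.add_one_le_exp _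
  have h2 : Real.exp a - Real.exp b = Real.exp a * (1 - Real.exp (b - a)) := by
    rw [mul_sub, mul_one, ← Real.exp_add]; ring_nf
  rw [h2]
  have h3 : Real.exp a * (1 - Real.exp (b - a)) ≤ Real.exp a * (a - b) :=
    mul_le_mul_of_nonneg_left (by linarith) (Real.exp_pos a).le
  have h4 : Real.exp a * (a - b) ≤ Real.exp C * (a - b) :=
    mul_le_mul_of_nonneg_right (Real.exp_le_exp.2 ha) (by linarith)
  linarith


noncomputable def chi (s : ℝ) : ℝ := ∫ τ in (0:ℝ)..s, Real.pi * c τ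

lemma c_intble (a b : ℝ) : IntervalIntegrable (fun τ => Real.pi * c τ) volume a b :=
  (continuous_const.mul c_cont).intervalIntegrable a b

lemma chi_hasDeriv (s : ℝ) : HasDerivAt chi (Real.pi * c s) s :=
  intervalIntegral.integral_hasDerivAt_right (c_intble 0 s)
    ((continuous_const.mul c_cont).stronglyMeasurableAtFilter _ _)
    ((continuous_const.mul c_cont).continuousAt)

lemma chi_cont : Continuous chi :=
  continuous_iff_continuousAt.2 fun s => (chi_hasDeriv s).differentiableAt.continuousAt

lemma sin_deriv (τ : ℝ) : HasDerivAt (fun u => Real.sin (Real.pi * u)) (Real.pi * Real.cos (Real.pi * τ)) τ := by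
  have h := (Real.hasDerivAt_sin (Real.pi * τ)).comp τ ((hasDerivAt_id τ).const_mul Real.pi)
  simp only [Function.comp_def, id] at h
  exact h.congr_deriv (by ring)

lemma chi_eq_sin {s : ℝ} (h : |s| ≤ 1/2) : chi s = Real.sin (Real.pi * s) := by
  have hcong : ∀ τ ∈ Set.uIcc (0:ℝ) s, Real.pi * c τ = Real.pi * Real.cos (Real.pi * τ) := by
    intro τ hτ
    have : |τ| ≤ 1/2 := by
      rcases _root_.abs_le.1 h with ⟨h1, h2⟩
      rcases Set.mem_uIcc.1 hτ with ⟨ha, hb⟩ | ⟨ha, hb⟩ <;> rw [_root_.abs_le] <;> constructor <;> linarith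
    rw [c_eq_cos this]
  rw [chi, intervalIntegral.integral_congr hcong,
    intervalIntegral.integral_eq_sub_of_hasDerivAt (fun τ _ => sin_deriv τ)
      ((continuous_const.mul (Real.continuous_cos.comp (continuous_const.mul continuous_id))).intervalIntegrable 0 s)]
  simp

lemma chi_half : chi (1/2) = 1 := by
  rw [chi_eq_sin (by rw [_root_.abs_of_nonneg (by norm_num : (0:ℝ) ≤ 1/2)]),
    show Real.pi * (1/2) = Real.pi/2 by ring, Real.sin_pi_div_two]

lemma chi_neg_half : chi (-(1/2)) = -1 := by
  rw [chi_eq_sin (by rw [_root_.abs_neg, _root_.abs_of_nonneg (by norm_num : (0:ℝ) ≤ 1/2)]),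
    show Real.pi * (-(1/2)) = -(Real.pi/2) by ring, Real.sin_neg, Real.sin_pi_div_two]

lemma chi_eq_one {s : ℝ} (h : 1/2 ≤ s) : chi s = 1 := by
  have hsplit := intervalIntegral.integral_add_adjacent_intervals
    (c_intble 0 (1/2)) (c_intble (1/2) s)
  have hzero : (∫ τ in (1/2:ℝ)..s, Real.pi * c τ) = 0 := by
    rw [intervalIntegral.integral_congr (g := fun _ => (0:ℝ)) ?_, intervalIntegral.integral_zero]
    intro τ hτ
    rw [Set.uIcc_of_le h] at hτ
    have : 1/2 ≤ |τ| := le_trans hτ.1 (_root_.le_abs_self τ)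
    simp [c_eq_zero this]
  have : chi s = chi (1/2) + ∫ τ in (1/2:ℝ)..s, Real.pi * c τ := (by rw [chi, chi, ← hsplit])
  rw [this, hzero, chi_half]; ring

lemma chi_eq_neg_one {s : ℝ} (h : s ≤ -(1/2)) : chi s = -1 := by
  have hsplit := intervalIntegral.integral_add_adjacent_intervals
    (c_intble 0 (-(1/2))) (c_intble (-(1/2)) s)
  have hzero : (∫ τ in (-(1/2):ℝ)..s, Real.pi * c τ) = 0 := by
    rw [intervalIntegral.integral_congr (g := fun _ => (0:ℝ)) ?_, intervalIntegral.integral_zero]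
    intro τ hτ
    rw [Set.uIcc_of_ge h] at hτ
    have : 1/2 ≤ |τ| := by
      rw [← _root_.abs_neg]
      exact le_trans (by linarith [hτ.2] : 1/2 ≤ -τ) (_root_.le_abs_self (-τ))
    simp [c_eq_zero this]
  have : chi s = chi (-(1/2)) + ∫ τ in (-(1/2):ℝ)..s, Real.pi * c τ := (by rw [chi, chi, ← hsplit])
  rw [this, hzero, chi_neg_half]; ring

lemma sin_eq_countable (a : ℝ) : Set.Countable {t : ℝ | Real.sin t = a} := by
  have hsub : {t : ℝ | Real.sin t = a} ⊆
      ⋃ k : ℤ, {t : ℝ | Real.sin t = a ∧ |t - k * Real.pi| ≤ Real.pi/2} := by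
    intro t ht
    refine Set.mem_iUnion.2 ⟨round (t/Real.pi), ht, ?_⟩
    have h1 := _root_.abs_sub_round (t/Real.pi)
    have hpi := Real.pi_pos
    have he : t - (round (t/Real.pi) : ℤ) * Real.pi
        = Real.pi * (t/Real.pi - round (t/Real.pi)) := by
      field_simp
    rw [he, _root_.abs_mul, _root_.abs_of_nonneg hpi.le]
    calc Real.pi * |t/Real.pi - round (t/Real.pi)| ≤ Real.pi * (1/2) :=
          mul_le_mul_of_nonneg_left h1 hpi.le
      _ = Real.pi / 2 := by ring
  apply Set.Countable.mono hsub
  apply Set.countable_iUnion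
  intro k
  apply Set.Subsingleton.countable
  intro t₁ h₁ t₂ h₂
  obtain ⟨hs₁, hd₁⟩ := h₁
  obtain ⟨hs₂, hd₂⟩ := h₂
  have hu₁ : Real.sin (t₁ - k*Real.pi + k*Real.pi) = (-1)^k * Real.sin (t₁ - k*Real.pi) :=
    Real.sin_add_int_mul_pi _ k
  have hu₂ : Real.sin (t₂ - k*Real.pi + k*Real.pi) = (-1)^k * Real.sin (t₂ - k*Real.pi) :=
    Real.sin_add_int_mul_pi _ k
  simp only [sub_add_cancel] at hu₁ hu₂
  have hne : ((-1:ℝ))^k ≠ 0 := by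
    apply zpow_ne_zero; norm_num
  have hsin : Real.sin (t₁ - k*Real.pi) = Real.sin (t₂ - k*Real.pi) := by
    apply mul_left_cancel₀ hne
    rw [← hu₁, ← hu₂, hs₁, hs₂]
  have := Real.injOn_sin (_root_.abs_le.1 hd₁ : _) (_root_.abs_le.1 hd₂ : _)
  have heq : t₁ - k*Real.pi = t₂ - k*Real.pi := by
    apply Real.injOn_sin _ _ hsin
    · exact ⟨(_root_.abs_le.1 hd₁).1, (_root_.abs_le.1 hd₁).2⟩
    · exact ⟨(_root_.abs_le.1 hd₂).1, (_root_.abs_le.1 hd₂).2⟩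
  linarith

lemma sin_affine_null (y ρ b : ℝ) (hρ : ρ ≠ 0) :
    volume {t : ℝ | y + ρ * Real.sin t = b} = 0 := by
  have : {t : ℝ | y + ρ * Real.sin t = b} ⊆ {t : ℝ | Real.sin t = (b - y)/ρ} := by
    intro t ht
    simp only [Set.mem_setOf_eq] at ht ⊢
    field_simp
    linarith
  exact measure_mono_null this ((sin_eq_countable _).measure_zero _)


lemma F_lip (x y R : ℝ) {ρ₁ ρ₂ t : ℝ} (h₁ : |ρ₁| ≤ R) (h₂ : |ρ₂| ≤ R) :
    |Real.exp (Real.pi*(x + ρ₁*Real.cos t)) * c (y + ρ₁*Real.sin t)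
      - Real.exp (Real.pi*(x + ρ₂*Real.cos t)) * c (y + ρ₂*Real.sin t)|
    ≤ (2*Real.pi*Real.exp (Real.pi*(x+R))) * |ρ₁ - ρ₂| := by
  have hpi := Real.pi_pos
  set E := Real.exp (Real.pi*(x+R)) with hE
  set A := Real.exp (Real.pi*(x + ρ₁*Real.cos t))
  set B := c (y + ρ₁*Real.sin t)
  set A' := Real.exp (Real.pi*(x + ρ₂*Real.cos t))
  set B' := c (y + ρ₂*Real.sin t)
  have hcos := Real.abs_cos_le_one t
  have hsin := Real.abs_sin_le_one t
  have hu1 : Real.pi*(x + ρ₁*Real.cos t) ≤ Real.pi*(x+R) := by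
    have h := _root_.abs_mul ρ₁ (Real.cos t) ▸ _root_.le_abs_self (ρ₁ * Real.cos t)
    nlinarith [_root_.abs_nonneg ρ₁, mul_le_mul h₁ hcos (_root_.abs_nonneg _) (by linarith [_root_.abs_nonneg ρ₁] : (0:ℝ) ≤ R)]
  have hu2 : Real.pi*(x + ρ₂*Real.cos t) ≤ Real.pi*(x+R) := by
    have h := _root_.abs_mul ρ₂ (Real.cos t) ▸ _root_.le_abs_self (ρ₂ * Real.cos t)
    nlinarith [_root_.abs_nonneg ρ₂, mul_le_mul h₂ hcos (_root_.abs_nonneg _) (by linarith [_root_.abs_nonneg ρ₂] : (0:ℝ) ≤ R)]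
  have hAA : |A - A'| ≤ E * (Real.pi * |ρ₁ - ρ₂|) := by
    have h := exp_lip hu1 hu2
    have heq : |Real.pi*(x + ρ₁*Real.cos t) - Real.pi*(x + ρ₂*Real.cos t)|
        = Real.pi * (|ρ₁ - ρ₂| * |Real.cos t|) := by
      rw [show Real.pi*(x + ρ₁*Real.cos t) - Real.pi*(x + ρ₂*Real.cos t)
          = Real.pi * ((ρ₁ - ρ₂) * Real.cos t) by ring, _root_.abs_mul, _root_.abs_mul,
        _root_.abs_of_nonneg hpi.le]
    rw [heq] at h
    calc |A - A'| ≤ E * (Real.pi * (|ρ₁ - ρ₂| * |Real.cos t|)) := h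
      _ ≤ E * (Real.pi * |ρ₁ - ρ₂|) := by
          apply mul_le_mul_of_nonneg_left _ (Real.exp_pos _).le
          apply mul_le_mul_of_nonneg_left _ hpi.le
          nlinarith [_root_.abs_nonneg (ρ₁ - ρ₂)]
  have hBB : |B - B'| ≤ Real.pi * |ρ₁ - ρ₂| := by
    have h := c_lip (y + ρ₁*Real.sin t) (y + ρ₂*Real.sin t)
    have heq : |y + ρ₁*Real.sin t - (y + ρ₂*Real.sin t)| = |ρ₁ - ρ₂| * |Real.sin t| := by
      rw [show y + ρ₁*Real.sin t - (y + ρ₂*Real.sin t) = (ρ₁ - ρ₂) * Real.sin t by ring, _root_.abs_mul]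
    rw [heq] at h
    calc |B - B'| ≤ Real.pi * (|ρ₁ - ρ₂| * |Real.sin t|) := h
      _ ≤ Real.pi * |ρ₁ - ρ₂| := by
          apply mul_le_mul_of_nonneg_left _ hpi.le
          nlinarith [_root_.abs_nonneg (ρ₁ - ρ₂)]
  have hBabs : |B| ≤ 1 := _root_.abs_le.2 ⟨by linarith [c_nonneg (y + ρ₁*Real.sin t)], c_le_one _⟩
  have hA'abs : |A'| ≤ E := by
    rw [_root_.abs_of_nonneg (Real.exp_pos _).le]
    exact Real.exp_le_exp.2 hu2
  calc |A * B - A' * B'| = |(A - A') * B + A' * (B - B')| := by ring_nf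
    _ ≤ |(A - A') * B| + |A' * (B - B')| := abs_add_le _ _
    _ = |A - A'| * |B| + |A'| * |B - B'| := by rw [_root_.abs_mul, _root_.abs_mul]
    _ ≤ (E * (Real.pi * |ρ₁ - ρ₂|)) * 1 + E * (Real.pi * |ρ₁ - ρ₂|) := by
        have hm1 := mul_le_mul hAA hBabs (_root_.abs_nonneg _) (by positivity)
        have hm2 := mul_le_mul hA'abs hBB (_root_.abs_nonneg _) (by positivity)
        linarith
    _ = (2*Real.pi*E) * |ρ₁ - ρ₂| := by ring

lemma key (x y : ℝ) (hy : |y| ≤ 1/2) {r : ℝ} (hr : 0 < r) :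
    2*Real.pi*(Real.exp (Real.pi*x) * c y) ≤
    ∫ t in (0:ℝ)..(2*Real.pi), Real.exp (Real.pi*(x + r*Real.cos t)) * c (y + r*Real.sin t) := by
  have hpi := Real.pi_pos
  set F : ℝ → ℝ → ℝ :=
    fun ρ t => Real.exp (Real.pi*(x + ρ*Real.cos t)) * c (y + ρ*Real.sin t) with hF
  set P : ℝ → ℝ := fun ρ => ∫ t in (0:ℝ)..(2*Real.pi), F ρ t with hPdef
  have hFcont : ∀ ρ : ℝ, Continuous (F ρ) := by
    intro ρ
    exact (Real.continuous_exp.comp (continuous_const.mul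
        (continuous_const.add (continuous_const.mul Real.continuous_cos)))).mul
      (c_cont.comp (continuous_const.add (continuous_const.mul Real.continuous_sin)))
  have habs_mem : ∀ ρ ∈ Icc (0:ℝ) r, |ρ| ≤ r := fun ρ hρ => by
    rw [_root_.abs_of_nonneg hρ.1]; exact hρ.2
  -- continuity of P on Icc 0 r
  have hPcont : ContinuousOn P (Icc 0 r) := by
    have hL : LipschitzOnWith (Real.toNNReal ((2*Real.pi*Real.exp (Real.pi*(x+r))) * (2*Real.pi)))
        P (Icc 0 r) := by
      apply LipschitzOnWith.of_dist_le_mul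
      intro ρ₁ h₁ ρ₂ h₂
      rw [Real.dist_eq, Real.dist_eq, Real.coe_toNNReal _ (by positivity)]
      have hsub : P ρ₁ - P ρ₂ = ∫ t in (0:ℝ)..(2*Real.pi), (F ρ₁ t - F ρ₂ t) := by
        rw [intervalIntegral.integral_sub ((hFcont ρ₁).intervalIntegrable _ _)
          ((hFcont ρ₂).intervalIntegrable _ _)]
      rw [hsub]
      have hb := intervalIntegral.norm_integral_le_of_norm_le_const
        (C := (2*Real.pi*Real.exp (Real.pi*(x+r))) * |ρ₁ - ρ₂|)
        (f := fun t => F ρ₁ t - F ρ₂ t) (a := 0) (b := 2*Real.pi) ?_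
      · rw [Real.norm_eq_abs] at hb
        calc |∫ t in (0:ℝ)..(2*Real.pi), (F ρ₁ t - F ρ₂ t)|
            ≤ (2*Real.pi*Real.exp (Real.pi*(x+r))) * |ρ₁ - ρ₂| * |2*Real.pi - 0| := hb
          _ = (2*Real.pi*Real.exp (Real.pi*(x+r))) * (2*Real.pi) * |ρ₁ - ρ₂| := by
              rw [sub_zero, _root_.abs_of_nonneg (by positivity : (0:ℝ) ≤ 2*Real.pi)]; ring
      · intro t _
        rw [Real.norm_eq_abs]
        exact F_lip x y r (habs_mem ρ₁ h₁) (habs_mem ρ₂ h₂)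
    exact hL.continuousOn
  -- derivative nonneg on interior
  have hkey : ∀ ρ₀ ∈ Ioo (0:ℝ) r, ∃ d : ℝ, HasDerivAt P d ρ₀ ∧ 0 ≤ d := by
    intro ρ₀ hρ₀
    obtain ⟨hρpos, hρlt⟩ := hρ₀
    set dd : ℝ → ℝ := fun s => if |s| < 1/2 then -(Real.pi * Real.sin (Real.pi * s)) else 0 with hdd
    set Fd : ℝ → ℝ := fun t => Real.exp (Real.pi*(x + ρ₀*Real.cos t)) *
      (Real.pi * Real.cos t * c (y + ρ₀*Real.sin t) + Real.sin t * dd (y + ρ₀*Real.sin t)) with hFd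
    have hdd_meas : Measurable dd := by
      apply Measurable.ite (measurableSet_lt (_root_.continuous_abs.measurable) measurable_const)
      · exact (continuous_neg.comp (continuous_const.mul
          (Real.continuous_sin.comp (continuous_const.mul continuous_id)))).measurable
      · exact measurable_const
    have hFd_meas : AEStronglyMeasurable Fd (volume.restrict (Ι (0:ℝ) (2*Real.pi))) := by
      apply Measurable.aestronglyMeasurable
      apply Measurable.mul
      · exact (Real.continuous_exp.comp (continuous_const.mul
          (continuous_const.add (continuous_const.mul Real.continuous_cos)))).measurable
      apply Measurable.add
      · exact ((continuous_const.mul Real.continuous_cos).mul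
          (c_cont.comp (continuous_const.add (continuous_const.mul Real.continuous_sin)))).measurable
      · exact Real.continuous_sin.measurable.mul
          (hdd_meas.comp (continuous_const.add (continuous_const.mul Real.continuous_sin)).measurable)
    have hball : ∀ ρ ∈ ball ρ₀ (ρ₀/2), |ρ| ≤ 2*r := by
      intro ρ hρ
      rw [mem_ball, Real.dist_eq] at hρ
      rw [_root_.abs_le]
      rcases _root_.abs_le.1 hρ.le with ⟨ha, hb⟩
      constructor <;> nlinarith
    have hlip : ∀ᵐ t : ℝ ∂volume, t ∈ Ι (0:ℝ) (2*Real.pi) →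
        LipschitzOnWith (Real.nnabs (2*Real.pi*Real.exp (Real.pi*(x+2*r))))
          (fun ρ => F ρ t) (ball ρ₀ (ρ₀/2)) := by
      apply Filter.Eventually.of_forall
      intro t _
      apply LipschitzOnWith.of_dist_le_mul
      intro ρ₁ h₁ ρ₂ h₂
      have hnn : (0:ℝ) ≤ 2*Real.pi*Real.exp (Real.pi*(x+2*r)) := by positivity
      rw [Real.dist_eq, Real.dist_eq, Real.coe_nnabs]
      calc |F ρ₁ t - F ρ₂ t| ≤ 2*Real.pi*Real.exp (Real.pi*(x+2*r)) * |ρ₁ - ρ₂| :=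
            F_lip x y (2*r) (hball ρ₁ h₁) (hball ρ₂ h₂)
        _ ≤ |2*Real.pi*Real.exp (Real.pi*(x+2*r))| * |ρ₁ - ρ₂| := by
            rw [_root_.abs_of_nonneg hnn]
    have good : ∀ t : ℝ, y + ρ₀ * Real.sin t ≠ 1/2 → y + ρ₀ * Real.sin t ≠ -(1/2) →
        HasDerivAt (fun ρ => F ρ t) (Fd t) ρ₀ := by
      intro t hne1 hne2
      set s₀ := y + ρ₀ * Real.sin t with hs₀
      have hA : HasDerivAt (fun ρ => Real.exp (Real.pi*(x + ρ*Real.cos t)))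
          (Real.pi * Real.cos t * Real.exp (Real.pi*(x + ρ₀*Real.cos t))) ρ₀ := by
        have hin : HasDerivAt (fun ρ : ℝ => Real.pi*(x + ρ*Real.cos t)) (Real.pi * Real.cos t) ρ₀ := by
          have := (((hasDerivAt_id ρ₀).mul_const (Real.cos t)).const_add x).const_mul Real.pi
          simpa using this
        have := (Real.hasDerivAt_exp (Real.pi*(x + ρ₀*Real.cos t))).comp ρ₀ hin
        exact hin.exp.congr_deriv (by ring)
      have hB : HasDerivAt (fun ρ => c (y + ρ*Real.sin t)) (dd s₀ * Real.sin t) ρ₀ := by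
        have hin : HasDerivAt (fun ρ : ℝ => y + ρ*Real.sin t) (Real.sin t) ρ₀ := by
          have := ((hasDerivAt_id ρ₀).mul_const (Real.sin t)).const_add y
          simpa using this
        have htri : |s₀| < 1/2 ∨ 1/2 < |s₀| := by
          rcases lt_trichotomy (|s₀|) (1/2) with h | h | h
          · exact Or.inl h
          · exfalso
            rcases _root_.abs_eq (by norm_num : (0:ℝ) ≤ 1/2) |>.1 h with h' | h'
            · exact hne1 h'
            · exact hne2 h'
          · exact Or.inr h
        rcases htri with hlt | hgt
        · -- inside the strip : c = cos near s₀
          have hev : ∀ᶠ ρ in nhds ρ₀, c (y + ρ*Real.sin t) = Real.cos (Real.pi*(y + ρ*Real.sin t)) := by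
            have hto : Tendsto (fun ρ => |y + ρ*Real.sin t|) (nhds ρ₀) (nhds |s₀|) := by
              exact ((_root_.continuous_abs.comp (continuous_const.add
                (continuous_id.mul continuous_const))).tendsto ρ₀)
            filter_upwards [hto.eventually_lt_const hlt] with ρ hρ
            exact c_eq_cos hρ.le
          have hcosd : HasDerivAt (fun ρ => Real.cos (Real.pi*(y + ρ*Real.sin t)))
              (dd s₀ * Real.sin t) ρ₀ := by
            have hin2 : HasDerivAt (fun ρ : ℝ => Real.pi*(y + ρ*Real.sin t))
                (Real.pi * Real.sin t) ρ₀ := by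
              have := hin.const_mul Real.pi
              simpa [mul_add] using this
            have := (Real.hasDerivAt_cos (Real.pi*s₀)).comp ρ₀ hin2
            simp only [hdd]
            rw [if_pos hlt]
            exact this.congr_deriv (by ring)
          exact hcosd.congr_of_eventuallyEq (hev.mono fun ρ h => h)
        · -- outside : c = 0 near s₀
          have hev : ∀ᶠ ρ in nhds ρ₀, c (y + ρ*Real.sin t) = 0 := by
            have hto : Tendsto (fun ρ => |y + ρ*Real.sin t|) (nhds ρ₀) (nhds |s₀|) :=
              ((_root_.continuous_abs.comp (continuous_const.add
                (continuous_id.mul continuous_const))).tendsto ρ₀)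
            filter_upwards [hto.eventually_const_lt hgt] with ρ hρ
            exact c_eq_zero hρ.le
          have hzd : HasDerivAt (fun _ : ℝ => (0:ℝ)) (dd s₀ * Real.sin t) ρ₀ := by
            simp only [hdd]
            rw [if_neg (by push_neg; exact hgt.le)]
            simpa using hasDerivAt_const ρ₀ (0:ℝ)
          exact hzd.congr_of_eventuallyEq (hev.mono fun ρ h => h)
      have := hA.mul hB
      exact this.congr_deriv (by simp only [hFd, hF]; ring)
    have hdiff : ∀ᵐ t : ℝ ∂volume, t ∈ Ι (0:ℝ) (2*Real.pi) →
        HasDerivAt (fun ρ => F ρ t) (Fd t) ρ₀ := by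
      have hnull : volume ({t : ℝ | y + ρ₀ * Real.sin t = 1/2} ∪
          {t : ℝ | y + ρ₀ * Real.sin t = -(1/2)}) = 0 :=
        measure_union_null (sin_affine_null y ρ₀ _ hρpos.ne')
          (sin_affine_null y ρ₀ _ hρpos.ne')
      rw [MeasureTheory.ae_iff]
      apply measure_mono_null _ hnull
      intro t ht
      simp only [Set.mem_setOf_eq] at ht
      by_contra hmem
      simp only [Set.mem_union, Set.mem_setOf_eq, not_or] at hmem
      exact ht fun _ => good t hmem.1 hmem.2
    obtain ⟨hFd_int, hPd⟩ := intervalIntegral.hasDerivAt_integral_of_dominated_loc_of_lip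
      (F := F) (F' := Fd) (x₀ := ρ₀) (s := ball ρ₀ (ρ₀/2)) (a := 0) (b := 2*Real.pi)
      (bound := fun _ => 2*Real.pi*Real.exp (Real.pi*(x+2*r)))
      (ball_mem_nhds _ (by positivity))
      (Filter.Eventually.of_forall fun ρ => ((hFcont ρ).aestronglyMeasurable).restrict)
      ((hFcont ρ₀).intervalIntegrable _ _)
      hFd_meas hlip (intervalIntegrable_const) hdiff
    refine ⟨_, hPd, ?_⟩
    -- nonnegativity of the derivative via the conjugate primitive Λ
    set lam : ℝ → ℝ := fun t => (1/ρ₀) * (Real.exp (Real.pi*(x + ρ₀*Real.cos t)) *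
      chi (y + ρ₀*Real.sin t)) with hlam
    set lamd : ℝ → ℝ := fun t => Real.exp (Real.pi*(x + ρ₀*Real.cos t)) *
      (Real.pi * Real.cos t * c (y + ρ₀*Real.sin t)
        - Real.pi * Real.sin t * chi (y + ρ₀*Real.sin t)) with hlamd
    have hlam_deriv : ∀ t : ℝ, HasDerivAt lam (lamd t) t := by
      intro t
      have hA : HasDerivAt (fun t => Real.exp (Real.pi*(x + ρ₀*Real.cos t)))
          (Real.exp (Real.pi*(x + ρ₀*Real.cos t)) * (Real.pi * (ρ₀ * (-Real.sin t)))) t := by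
        have hin : HasDerivAt (fun t : ℝ => Real.pi*(x + ρ₀*Real.cos t))
            (Real.pi * (ρ₀ * (-Real.sin t))) t := by
          have := (((Real.hasDerivAt_cos t).const_mul ρ₀).const_add x).const_mul Real.pi
          simpa using this
        exact (Real.hasDerivAt_exp _).comp t hin
      have hB : HasDerivAt (fun t => chi (y + ρ₀*Real.sin t))
          ((Real.pi * c (y + ρ₀*Real.sin t)) * (ρ₀ * Real.cos t)) t := by
        have hin : HasDerivAt (fun t : ℝ => y + ρ₀*Real.sin t) (ρ₀ * Real.cos t) t := by
          have := ((Real.hasDerivAt_sin t).const_mul ρ₀).const_add y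
          simpa using this
        exact (chi_hasDeriv _).comp t hin
      have := (hA.mul hB).const_mul (1/ρ₀)
      exact this.congr_deriv (by symm; simp only [hlamd]; field_simp; ring)
    have hlamd_cont : Continuous lamd := by
      apply Continuous.mul
      · exact Real.continuous_exp.comp (continuous_const.mul
          (continuous_const.add (continuous_const.mul Real.continuous_cos)))
      apply Continuous.sub
      · exact (continuous_const.mul Real.continuous_cos).mul
          (c_cont.comp (continuous_const.add (continuous_const.mul Real.continuous_sin)))
      · exact (continuous_const.mul Real.continuous_sin).mul
          (chi_cont.comp (continuous_const.add (continuous_const.mul Real.continuous_sin)))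
    have hFTC : (∫ t in (0:ℝ)..(2*Real.pi), lamd t) = 0 := by
      rw [intervalIntegral.integral_eq_sub_of_hasDerivAt (fun t _ => hlam_deriv t)
        (hlamd_cont.intervalIntegrable _ _)]
      simp only [hlam]
      rw [Real.sin_two_pi, Real.cos_two_pi, Real.sin_zero, Real.cos_zero]
      ring
    have hmono : ∀ t : ℝ, lamd t ≤ Fd t := by
      intro t
      set s := y + ρ₀ * Real.sin t with hs
      have hfactor : Fd t - lamd t = Real.exp (Real.pi*(x + ρ₀*Real.cos t)) *
          (Real.sin t * (dd s + Real.pi * chi s)) := by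
        simp only [hFd, hlamd]
        ring
      have hsign : 0 ≤ Real.sin t * (dd s + Real.pi * chi s) := by
        rcases lt_or_ge (|s|) (1/2) with hlt | hge
        · simp only [hdd]
          rw [if_pos hlt, chi_eq_sin hlt.le]
          have hz : Real.sin t * (-(Real.pi * Real.sin (Real.pi * s)) + Real.pi * Real.sin (Real.pi * s)) = 0 := by ring
          rw [hz]
        · rcases le_or_gt (1/2) s with hp | hn
          · have hsin : 0 ≤ Real.sin t := by
              have h1 : 0 ≤ ρ₀ * Real.sin t := by
                have hyle : y ≤ 1/2 := le_trans (_root_.le_abs_self y) hy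
                simp only [hs] at hp
                linarith
              have h2 := mul_nonneg (inv_nonneg.2 hρpos.le) h1
              rwa [inv_mul_cancel_left₀ hρpos.ne'] at h2
            simp only [hdd]
            rw [if_neg (not_lt.2 hge), chi_eq_one hp]
            nlinarith
          · have hsneg : s ≤ -(1/2) := by
              rcases _root_.abs_cases s with ⟨he, _⟩ | ⟨he, _⟩
              · linarith [he ▸ hge]
              · linarith [he ▸ hge]
            have hsin : Real.sin t ≤ 0 := by
              have hyge : -(1/2) ≤ y := by linarith [_root_.neg_abs_le y]
              have h1 : ρ₀ * Real.sin t ≤ 0 := by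
                simp only [hs] at hsneg
                linarith
              have h2 := mul_nonpos_of_nonneg_of_nonpos (inv_nonneg.2 hρpos.le) h1
              rwa [inv_mul_cancel_left₀ hρpos.ne'] at h2
            simp only [hdd]
            rw [if_neg (not_lt.2 hge), chi_eq_neg_one hsneg]
            nlinarith
      have hepos := (Real.exp_pos (Real.pi*(x + ρ₀*Real.cos t))).le
      have := mul_nonneg hepos hsign
      linarith [hfactor, this]
    calc (0:ℝ) = ∫ t in (0:ℝ)..(2*Real.pi), lamd t := hFTC.symm
      _ ≤ ∫ t in (0:ℝ)..(2*Real.pi), Fd t :=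
          intervalIntegral.integral_mono_on (by positivity)
            (hlamd_cont.intervalIntegrable _ _) hFd_int (fun t _ => hmono t)
  -- conclude by monotonicity
  have hdiffOn : DifferentiableOn ℝ P (interior (Icc (0:ℝ) r)) := by
    rw [interior_Icc]
    intro ρ hρ
    obtain ⟨d, hd, _⟩ := hkey ρ hρ
    exact hd.differentiableAt.differentiableWithinAt
  have hderiv_nonneg : ∀ ρ ∈ interior (Icc (0:ℝ) r), 0 ≤ deriv P ρ := by
    rw [interior_Icc]
    intro ρ hρ
    obtain ⟨d, hd, hdn⟩ := hkey ρ hρ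
    rw [hd.deriv]
    exact hdn
  have hmonoP := monotoneOn_of_deriv_nonneg (convex_Icc 0 r) hPcont hdiffOn hderiv_nonneg
  have hle : P 0 ≤ P r := hmonoP (Set.left_mem_Icc.2 hr.le) (Set.right_mem_Icc.2 hr.le) hr.le
  have hP0 : P 0 = 2*Real.pi*(Real.exp (Real.pi*x) * c y) := by
    simp only [hPdef, hF, zero_mul, add_zero]
    rw [intervalIntegral.integral_const]
    rw [smul_eq_mul]
    ring
  rw [hP0] at hle
  exact hle


noncomputable def G (z : ℂ) : ℝ := Real.exp (Real.pi * z.re) * c z.im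

lemma G_nonneg (z : ℂ) : 0 ≤ G z := mul_nonneg (Real.exp_pos _).le (c_nonneg _)

lemma G_cont : Continuous G :=
  (Real.continuous_exp.comp (continuous_const.mul Complex.continuous_re)).mul
    (c_cont.comp Complex.continuous_im)

lemma vfun_eq (z : ℂ) : vfun z = max (G z - 1) 0 := by
  rw [vfun]
  by_cases h : 0 < z.re ∧ |z.im| < 1/2
  · rw [if_pos h, G, c_eq_cos h.2.le]
  · rw [if_neg h]
    symm
    apply max_eq_right
    rw [sub_nonpos]
    rcases not_and_or.1 h with hx | hy
    · push_neg at hx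
      rcases le_or_gt (1/2) (|z.im|) with him | him
      · rw [G, c_eq_zero him]
        nlinarith [Real.exp_pos (Real.pi * z.re)]
      · rw [G, c_eq_cos him.le]
        have h1 : Real.exp (Real.pi * z.re) ≤ 1 := by
          rw [← Real.exp_zero]
          exact Real.exp_le_exp.2 (by nlinarith [Real.pi_pos])
        have h2 : Real.cos (Real.pi * z.im) ≤ 1 := Real.cos_le_one _
        have h3 : 0 ≤ Real.cos (Real.pi * z.im) := by
          have := c_eq_cos him.le
          have hn := c_nonneg z.im
          rw [this] at hn; exact hn
        nlinarith [Real.exp_pos (Real.pi * z.re)]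
    · push_neg at hy
      rw [G, c_eq_zero hy]
      nlinarith [Real.exp_pos (Real.pi * z.re)]

lemma vfun_cont : Continuous vfun := by
  have : vfun = fun z => max (G z - 1) 0 := funext vfun_eq
  rw [this]
  exact (G_cont.sub continuous_const).max continuous_const

lemma path_re (z : ℂ) (r t : ℝ) : (z + r * Complex.exp (Complex.I * t)).re = z.re + r * Real.cos t := by
  rw [Complex.add_re, Complex.re_ofReal_mul, mul_comm Complex.I (t:ℂ), Complex.exp_ofReal_mul_I_re]

lemma path_im (z : ℂ) (r t : ℝ) : (z + r * Complex.exp (Complex.I * t)).im = z.im + r * Real.sin t := by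
  rw [Complex.add_im, Complex.im_ofReal_mul, mul_comm Complex.I (t:ℂ), Complex.exp_ofReal_mul_I_im]


end SubhAux

open SubhAux in
theorem stmt_6 : Subharmonic vfun := by
  constructor
  · exact vfun_cont.upperSemicontinuous
  intro z r hr
  have hpi := Real.pi_pos
  have hpath_cont : Continuous (fun t : ℝ => z + r * Complex.exp (Complex.I * t)) := by
    continuity
  have hv_int : IntervalIntegrable (fun t : ℝ => vfun (z + r * Complex.exp (Complex.I * t)))
      volume 0 (2*Real.pi) := (vfun_cont.comp hpath_cont).intervalIntegrable _ _
  have hG_int : IntervalIntegrable (fun t : ℝ => G (z + r * Complex.exp (Complex.I * t)) - 1)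
      volume 0 (2*Real.pi) := ((G_cont.comp hpath_cont).sub continuous_const).intervalIntegrable _ _
  rcases le_or_gt (G z) 1 with hG | hG
  · -- vfun z = 0
    have hz : vfun z = 0 := by
      rw [vfun_eq]
      exact max_eq_right (by linarith)
    rw [hz]
    apply mul_nonneg (by positivity)
    apply intervalIntegral.integral_nonneg (by positivity)
    intro t _
    rw [vfun_eq]
    exact le_max_right _ _
  · -- G z > 1 : use the key inequality
    have hcy : 0 < c z.im := by
      by_contra hc
      push_neg at hc
      have : c z.im = 0 := le_antisymm hc (c_nonneg _)
      rw [G, this, mul_zero] at hG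
      linarith
    have him : |z.im| ≤ 1/2 := by
      by_contra him
      push_neg at him
      rw [c_eq_zero him.le] at hcy
      linarith
    have hkey := key z.re z.im him hr
    have hGpath : ∀ t : ℝ, G (z + r * Complex.exp (Complex.I * t))
        = Real.exp (Real.pi*(z.re + r*Real.cos t)) * c (z.im + r*Real.sin t) := by
      intro t
      rw [G, path_re, path_im]
    have hexp_int : IntervalIntegrable (fun t : ℝ =>
        Real.exp (Real.pi*(z.re + r*Real.cos t)) * c (z.im + r*Real.sin t)) volume 0 (2*Real.pi) :=
      ((Real.continuous_exp.comp (continuous_const.mul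
          (continuous_const.add (continuous_const.mul Real.continuous_cos)))).mul
        (c_cont.comp (continuous_const.add
          (continuous_const.mul Real.continuous_sin)))).intervalIntegrable _ _
    have hcongr : (∫ t in (0:ℝ)..(2*Real.pi), (G (z + r * Complex.exp (Complex.I * t)) - 1))
        = ∫ t in (0:ℝ)..(2*Real.pi),
            (Real.exp (Real.pi*(z.re + r*Real.cos t)) * c (z.im + r*Real.sin t) - 1) :=
      intervalIntegral.integral_congr fun t _ => by rw [hGpath t]
    have hsplit : (∫ t in (0:ℝ)..(2*Real.pi),
            (Real.exp (Real.pi*(z.re + r*Real.cos t)) * c (z.im + r*Real.sin t) - 1))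
        = (∫ t in (0:ℝ)..(2*Real.pi),
            Real.exp (Real.pi*(z.re + r*Real.cos t)) * c (z.im + r*Real.sin t)) - 2*Real.pi := by
      rw [intervalIntegral.integral_sub hexp_int intervalIntegrable_const,
        intervalIntegral.integral_const, smul_eq_mul, sub_zero, mul_one]
    have hmono : (∫ t in (0:ℝ)..(2*Real.pi), (G (z + r * Complex.exp (Complex.I * t)) - 1))
        ≤ ∫ t in (0:ℝ)..(2*Real.pi), vfun (z + r * Complex.exp (Complex.I * t)) := by
      apply intervalIntegral.integral_mono_on (by positivity) hG_int hv_int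
      intro t _
      rw [vfun_eq]
      exact le_max_left _ _
    have hGz : G z = Real.exp (Real.pi*z.re) * c z.im := rfl
    have hlow : 2*Real.pi*(G z - 1) ≤
        ∫ t in (0:ℝ)..(2*Real.pi), (G (z + r * Complex.exp (Complex.I * t)) - 1) := by
      rw [hcongr, hsplit]
      have he : 2*Real.pi*(G z - 1) = 2*Real.pi*(Real.exp (Real.pi*z.re) * c z.im) - 2*Real.pi := by
        rw [hGz]; ring
      rw [he]
      linarith [hkey]
    have hvz : vfun z = G z - 1 := by
      rw [vfun_eq]; exact max_eq_left (by linarith)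
    rw [hvz]
    have h2pi : (0:ℝ) < 2*Real.pi := by positivity
    have hfin : 2*Real.pi*(G z - 1) ≤ 2*Real.pi *
        ((1/(2*Real.pi)) * ∫ t in (0:ℝ)..(2*Real.pi), vfun (z + r * Complex.exp (Complex.I * t))) := by
      rw [← mul_assoc, mul_one_div, div_self h2pi.ne', one_mul]
      linarith [hmono, hlow]
    exact (mul_le_mul_iff_right₀ h2pi).1 hfin
end

section
/- The function b : ℂ → ℝ defined by b(x + iy) = cosh(πy)·cos(π(x − c − 1/2)) for x ∈ (c, c + 1) and b = 0 otherwise, where c ∈ ℝ is fixed, is subharmonic on ℂ. -/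
open Real Complex

noncomputable def bfun (c : ℝ) (z : ℂ) : ℝ :=
  if z.re ∈ Set.Ioo c (c + 1) then
    Real.cosh (Real.pi * z.im) * Real.cos (Real.pi * (z.re - c - 1 / 2))
  else 0

section Aux

open Set MeasureTheory Metric intervalIntegral
open scoped Interval

/-- Auxiliary globally-defined profile function. -/
noncomputable def gfun (c x : ℝ) : ℝ :=
  max 0 (min (Real.sin (Real.pi * (x - c))) (min (Real.pi * (x - c)) (Real.pi * (c + 1 - x))))

lemma gfun_eq_sin (c x : ℝ) (h1 : c < x) (h2 : x < c + 1) :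
    gfun c x = Real.sin (Real.pi * (x - c)) := by
  unfold gfun
  have hs0 : 0 ≤ Real.pi * (x - c) := by
    have := Real.pi_pos; nlinarith
  have hs1 : Real.pi * (x - c) ≤ Real.pi := by
    have := Real.pi_pos; nlinarith
  have hsin0 : 0 ≤ Real.sin (Real.pi * (x - c)) := Real.sin_nonneg_of_nonneg_of_le_pi hs0 hs1
  have hle1 : Real.sin (Real.pi * (x - c)) ≤ Real.pi * (x - c) := Real.sin_le hs0
  have hle2 : Real.sin (Real.pi * (x - c)) ≤ Real.pi * (c + 1 - x) := by
    have h0 : 0 ≤ Real.pi * (c + 1 - x) := by have := Real.pi_pos; nlinarith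
    have : Real.sin (Real.pi * (x - c)) = Real.sin (Real.pi - Real.pi * (x - c)) :=
      (Real.sin_pi_sub _).symm
    rw [this]
    have harg : Real.pi - Real.pi * (x - c) = Real.pi * (c + 1 - x) := by ring
    rw [harg]
    exact Real.sin_le h0
  rw [min_eq_left (le_min hle1 hle2), max_eq_right hsin0]

lemma gfun_eq_zero (c x : ℝ) (h : x ∉ Set.Ioo c (c + 1)) : gfun c x = 0 := by
  unfold gfun
  rcases not_and_or.mp h with h' | h'
  · push_neg at h'
    have : Real.pi * (x - c) ≤ 0 := by have := Real.pi_pos; nlinarith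
    have hmin : min (Real.sin (Real.pi * (x - c)))
        (min (Real.pi * (x - c)) (Real.pi * (c + 1 - x))) ≤ 0 :=
      le_trans (min_le_right _ _) (le_trans (min_le_left _ _) this)
    exact max_eq_left hmin
  · push_neg at h'
    have : Real.pi * (c + 1 - x) ≤ 0 := by have := Real.pi_pos; nlinarith
    have hmin : min (Real.sin (Real.pi * (x - c)))
        (min (Real.pi * (x - c)) (Real.pi * (c + 1 - x))) ≤ 0 :=
      le_trans (min_le_right _ _) (le_trans (min_le_right _ _) this)
    exact max_eq_left hmin

lemma cos_shift (c x : ℝ) :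
    Real.cos (Real.pi * (x - c - 1 / 2)) = Real.sin (Real.pi * (x - c)) := by
  have : Real.pi * (x - c - 1 / 2) = Real.pi * (x - c) - Real.pi / 2 := by ring
  rw [this, Real.cos_sub_pi_div_two]

lemma bfun_eq (c : ℝ) (z : ℂ) : bfun c z = Real.cosh (Real.pi * z.im) * gfun c z.re := by
  unfold bfun
  by_cases h : z.re ∈ Set.Ioo c (c + 1)
  · rw [if_pos h, gfun_eq_sin c z.re h.1 h.2, cos_shift]
  · rw [if_neg h, gfun_eq_zero c z.re h, mul_zero]

lemma gfun_nonneg (c x : ℝ) : 0 ≤ gfun c x := le_max_left _ _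

lemma gfun_le_one (c x : ℝ) : gfun c x ≤ 1 := by
  unfold gfun
  rcases le_or_gt (min (Real.sin (Real.pi * (x - c)))
      (min (Real.pi * (x - c)) (Real.pi * (c + 1 - x)))) 0 with h | h
  · rw [max_eq_left h]; norm_num
  · rw [max_eq_right h.le]
    exact le_trans (min_le_left _ _) (Real.sin_le_one _)

lemma bfun_nonneg (c : ℝ) (z : ℂ) : 0 ≤ bfun c z := by
  rw [bfun_eq]
  exact mul_nonneg (Real.cosh_pos _).le (gfun_nonneg c z.re)

lemma lipschitz_aux (a b : ℝ) (ha : |a| ≤ 1) :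
    LipschitzWith Real.pi.toNNReal (fun x : ℝ => Real.pi * (a * x + b)) := by
  apply LipschitzWith.of_dist_le_mul
  intro u v
  have h1 : Real.pi * (a * u + b) - Real.pi * (a * v + b) = Real.pi * a * (u - v) := by ring
  rw [Real.dist_eq, Real.dist_eq, h1, abs_mul, abs_mul, _root_.abs_of_pos Real.pi_pos,
    Real.coe_toNNReal _ Real.pi_pos.le]
  have : Real.pi * |a| ≤ Real.pi * 1 := mul_le_mul_of_nonneg_left ha Real.pi_pos.le
  nlinarith [abs_nonneg (u - v), Real.pi_pos]

lemma sin_lipschitz : LipschitzWith 1 Real.sin := by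
  apply lipschitzWith_of_nnnorm_deriv_le Real.differentiable_sin
  intro x
  rw [Real.deriv_sin, ← NNReal.coe_le_coe, coe_nnnorm, Real.norm_eq_abs, NNReal.coe_one]
  exact Real.abs_cos_le_one x

lemma gfun_lipschitz (c : ℝ) : LipschitzWith Real.pi.toNNReal (gfun c) := by
  have l2 : LipschitzWith Real.pi.toNNReal (fun x : ℝ => Real.pi * (x - c)) := by
    have := lipschitz_aux 1 (-c) (by norm_num)
    simpa [sub_eq_add_neg] using this
  have l3 : LipschitzWith Real.pi.toNNReal (fun x : ℝ => Real.pi * (c + 1 - x)) := by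
    have := lipschitz_aux (-1) (c + 1) (by norm_num)
    convert this using 2 with x
    ring
  have l1 : LipschitzWith (1 * Real.pi.toNNReal) (fun x => Real.sin (Real.pi * (x - c))) :=
    sin_lipschitz.comp l2
  rw [one_mul] at l1
  have lc : LipschitzWith Real.pi.toNNReal (fun _ : ℝ => (0 : ℝ)) := LipschitzWith.const' 0
  have := lc.max (l1.min (l2.min l3))
  rw [show gfun c = fun x => max 0 (min (Real.sin (Real.pi * (x - c))) (min (Real.pi * (x - c)) (Real.pi * (c + 1 - x)))) from rfl]
  simpa [sup_idem] using this

lemma gfun_dist (c a b : ℝ) : |gfun c a - gfun c b| ≤ Real.pi * |a - b| := by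
  have := (gfun_lipschitz c).dist_le_mul a b
  rwa [Real.dist_eq, Real.dist_eq, Real.coe_toNNReal _ Real.pi_pos.le] at this

lemma cosh_lip (M a b : ℝ) (ha : |a| ≤ M) (hb : |b| ≤ M) :
    |Real.cosh a - Real.cosh b| ≤ Real.cosh M * |a - b| := by
  have key : ∀ x ∈ Set.Icc (-M) M, ‖Real.sinh x‖ ≤ Real.cosh M := by
    intro x hx
    rw [Real.norm_eq_abs, Real.abs_sinh]
    have h1 : |x| ≤ M := abs_le.mpr ⟨hx.1, hx.2⟩
    exact (Real.sinh_le_sinh.mpr h1).trans (Real.sinh_lt_cosh M).le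
  have h := Convex.norm_image_sub_le_of_norm_hasDerivWithin_le
    (f := Real.cosh) (f' := Real.sinh) (s := Set.Icc (-M) M) (C := Real.cosh M)
    (fun x _ => (Real.hasDerivAt_cosh x).hasDerivWithinAt) key (convex_Icc _ _)
    (abs_le.mp hb |> fun h => ⟨h.1, h.2⟩) (abs_le.mp ha |> fun h => ⟨h.1, h.2⟩)
  simpa [Real.norm_eq_abs] using h

/-- Lipschitz estimate for `bfun` on a horizontal slab. -/
lemma bfun_dist (c B : ℝ) (hB : 0 ≤ B) (w1 w2 : ℂ) (h1 : |w1.im| ≤ B) (h2 : |w2.im| ≤ B) :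
    |bfun c w1 - bfun c w2| ≤ 2 * Real.pi * Real.cosh (Real.pi * B) * ‖w1 - w2‖ := by
  rw [bfun_eq, bfun_eq]
  have hg1 : |gfun c w1.re - gfun c w2.re| ≤ Real.pi * |w1.re - w2.re| := gfun_dist _ _ _
  have hc : |Real.cosh (Real.pi * w1.im) - Real.cosh (Real.pi * w2.im)| ≤
      Real.cosh (Real.pi * B) * |Real.pi * w1.im - Real.pi * w2.im| := by
    apply cosh_lip
    · rw [abs_mul, _root_.abs_of_pos Real.pi_pos]
      exact mul_le_mul_of_nonneg_left h1 Real.pi_pos.le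
    · rw [abs_mul, _root_.abs_of_pos Real.pi_pos]
      exact mul_le_mul_of_nonneg_left h2 Real.pi_pos.le
  have hcoshb : Real.cosh (Real.pi * w1.im) ≤ Real.cosh (Real.pi * B) := by
    apply Real.cosh_le_cosh.mpr
    rw [abs_mul, _root_.abs_of_pos Real.pi_pos, abs_mul, _root_.abs_of_pos Real.pi_pos,
      _root_.abs_of_nonneg hB]
    exact mul_le_mul_of_nonneg_left h1 Real.pi_pos.le
  have hre : |w1.re - w2.re| ≤ ‖w1 - w2‖ := by
    have := Complex.abs_re_le_norm (w1 - w2)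
    simpa [Complex.sub_re] using this
  have him : |w1.im - w2.im| ≤ ‖w1 - w2‖ := by
    have := Complex.abs_im_le_norm (w1 - w2)
    simpa [Complex.sub_im] using this
  have key : Real.cosh (Real.pi * w1.im) * gfun c w1.re -
      Real.cosh (Real.pi * w2.im) * gfun c w2.re =
      Real.cosh (Real.pi * w1.im) * (gfun c w1.re - gfun c w2.re) +
      (Real.cosh (Real.pi * w1.im) - Real.cosh (Real.pi * w2.im)) * gfun c w2.re := by ring
  rw [key]
  have h3 : |Real.cosh (Real.pi * w1.im) * (gfun c w1.re - gfun c w2.re)| ≤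
      Real.cosh (Real.pi * B) * (Real.pi * ‖w1 - w2‖) := by
    rw [abs_mul, _root_.abs_of_pos (Real.cosh_pos _)]
    have := mul_le_mul hcoshb (hg1.trans (mul_le_mul_of_nonneg_left hre Real.pi_pos.le))
      (abs_nonneg _) (Real.cosh_pos _).le
    linarith
  have h4 : |(Real.cosh (Real.pi * w1.im) - Real.cosh (Real.pi * w2.im)) * gfun c w2.re| ≤
      Real.cosh (Real.pi * B) * (Real.pi * ‖w1 - w2‖) := by
    rw [abs_mul]
    have hg2 : |gfun c w2.re| ≤ 1 := by
      rw [_root_.abs_of_nonneg (gfun_nonneg _ _)]; exact gfun_le_one _ _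
    have h5 : |Real.pi * w1.im - Real.pi * w2.im| ≤ Real.pi * ‖w1 - w2‖ := by
      rw [← mul_sub, abs_mul, _root_.abs_of_pos Real.pi_pos]
      exact mul_le_mul_of_nonneg_left him Real.pi_pos.le
    calc |Real.cosh (Real.pi * w1.im) - Real.cosh (Real.pi * w2.im)| * |gfun c w2.re|
        ≤ (Real.cosh (Real.pi * B) * (Real.pi * ‖w1 - w2‖)) * 1 := by
          apply mul_le_mul _ hg2 (abs_nonneg _) (by positivity)
          calc |Real.cosh (Real.pi * w1.im) - Real.cosh (Real.pi * w2.im)|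
              ≤ Real.cosh (Real.pi * B) * |Real.pi * w1.im - Real.pi * w2.im| := hc
            _ ≤ Real.cosh (Real.pi * B) * (Real.pi * ‖w1 - w2‖) :=
                mul_le_mul_of_nonneg_left h5 (Real.cosh_pos _).le
      _ = Real.cosh (Real.pi * B) * (Real.pi * ‖w1 - w2‖) := mul_one _
  calc |Real.cosh (Real.pi * w1.im) * (gfun c w1.re - gfun c w2.re) +
      (Real.cosh (Real.pi * w1.im) - Real.cosh (Real.pi * w2.im)) * gfun c w2.re|
      ≤ |Real.cosh (Real.pi * w1.im) * (gfun c w1.re - gfun c w2.re)| +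
        |(Real.cosh (Real.pi * w1.im) - Real.cosh (Real.pi * w2.im)) * gfun c w2.re| :=
        abs_add_le _ _
    _ ≤ Real.cosh (Real.pi * B) * (Real.pi * ‖w1 - w2‖) +
        Real.cosh (Real.pi * B) * (Real.pi * ‖w1 - w2‖) := add_le_add h3 h4
    _ = 2 * Real.pi * Real.cosh (Real.pi * B) * ‖w1 - w2‖ := by ring

lemma bfun_continuous (c : ℝ) : Continuous (bfun c) := by
  have : Continuous (fun z : ℂ => Real.cosh (Real.pi * z.im) * gfun c z.re) :=
    (Real.continuous_cosh.comp (continuous_const.mul Complex.continuous_im)).mul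
      ((gfun_lipschitz c).continuous.comp Complex.continuous_re)
  convert this using 1
  funext z
  exact bfun_eq c z

lemma csin_re (ζ : ℂ) : (Complex.sin ζ).re = Real.sin ζ.re * Real.cosh ζ.im := by
  rw [show ζ = (ζ.re : ℂ) + (ζ.im : ℂ) * Complex.I from (Complex.re_add_im ζ).symm]
  rw [Complex.sin_add_mul_I]
  simp [← Complex.ofReal_sin, ← Complex.ofReal_cos, ← Complex.ofReal_sinh, ← Complex.ofReal_cosh]

lemma csin_im (ζ : ℂ) : (Complex.sin ζ).im = Real.cos ζ.re * Real.sinh ζ.im := by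
  rw [show ζ = (ζ.re : ℂ) + (ζ.im : ℂ) * Complex.I from (Complex.re_add_im ζ).symm]
  rw [Complex.sin_add_mul_I]
  simp [← Complex.ofReal_sin, ← Complex.ofReal_cos, ← Complex.ofReal_sinh, ← Complex.ofReal_cosh]

lemma path_re (z : ℂ) (R t : ℝ) :
    (z + (R : ℂ) * Complex.exp (Complex.I * t)).re = z.re + R * Real.cos t := by
  rw [mul_comm Complex.I (t : ℂ), Complex.exp_mul_I]
  simp [Complex.add_re, Complex.mul_re, Complex.cos_ofReal_re, Complex.sin_ofReal_re]

lemma path_im (z : ℂ) (R t : ℝ) :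
    (z + (R : ℂ) * Complex.exp (Complex.I * t)).im = z.im + R * Real.sin t := by
  rw [mul_comm Complex.I (t : ℂ), Complex.exp_mul_I]
  simp [Complex.add_im, Complex.mul_im, Complex.cos_ofReal_im, Complex.sin_ofReal_im, Complex.sin_ofReal_re]

lemma HasDerivAt.creal {f : ℝ → ℂ} {f' : ℂ} {x : ℝ} (h : HasDerivAt f f' x) :
    HasDerivAt (fun t => (f t).re) f'.re x := by
  exact Complex.reCLM.hasFDerivAt.comp_hasDerivAt x h

lemma HasDerivAt.cimag {f : ℝ → ℂ} {f' : ℂ} {x : ℝ} (h : HasDerivAt f f' x) :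
    HasDerivAt (fun t => (f t).im) f'.im x := by
  exact Complex.imCLM.hasFDerivAt.comp_hasDerivAt x h

noncomputable def Dfun (c : ℝ) (z : ℂ) (R t : ℝ) : ℝ :=
  if (z + (R : ℂ) * Complex.exp (Complex.I * t)).re ∈ Set.Ioo c (c + 1) then
    ((Real.pi : ℂ) * Complex.cos ((Real.pi : ℂ) * (z + (R : ℂ) * Complex.exp (Complex.I * t) - c)) *
      Complex.exp (Complex.I * t)).re
  else 0

lemma pi_mul_re (w : ℂ) (c : ℝ) : ((Real.pi : ℂ) * (w - (c : ℂ))).re = Real.pi * (w.re - c) := by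
  simp [Complex.mul_re, Complex.sub_re, Complex.ofReal_re, Complex.ofReal_im, Complex.sub_im]

lemma pi_mul_im (w : ℂ) (c : ℝ) : ((Real.pi : ℂ) * (w - (c : ℂ))).im = Real.pi * w.im := by
  simp [Complex.mul_im, Complex.sub_im, Complex.ofReal_re, Complex.ofReal_im, Complex.sub_re]

lemma bfun_eq_sin_re (c : ℝ) (w : ℂ) (h : w.re ∈ Set.Ioo c (c + 1)) :
    bfun c w = (Complex.sin ((Real.pi : ℂ) * (w - (c : ℂ)))).re := by
  rw [csin_re, pi_mul_re, pi_mul_im]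
  unfold bfun
  rw [if_pos h, cos_shift]
  ring

lemma hasDeriv_inStrip (c : ℝ) (z : ℂ) (t R₀ : ℝ)
    (h : (z + (R₀ : ℂ) * Complex.exp (Complex.I * t)).re ∈ Set.Ioo c (c + 1)) :
    HasDerivAt (fun R : ℝ => bfun c (z + (R : ℂ) * Complex.exp (Complex.I * t)))
      (Dfun c z R₀ t) R₀ := by
  set e := Complex.exp (Complex.I * t) with he
  have hinner : ∀ ζ : ℂ, HasDerivAt (fun ζ : ℂ => (Real.pi : ℂ) * (z + ζ * e - (c : ℂ)))
      ((Real.pi : ℂ) * (1 * e)) ζ := by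
    intro ζ
    exact ((((hasDerivAt_id ζ).mul_const e).const_add z).sub_const (c : ℂ)).const_mul _
  have hE : HasDerivAt (fun ζ : ℂ => Complex.sin ((Real.pi : ℂ) * (z + ζ * e - (c : ℂ))))
      (Complex.cos ((Real.pi : ℂ) * (z + (R₀ : ℂ) * e - (c : ℂ))) * ((Real.pi : ℂ) * (1 * e)))
      (R₀ : ℂ) :=
    (Complex.hasDerivAt_sin _).comp _ (hinner _)
  have hR := hE.comp_ofReal (z := R₀)
  have hRe := hR.creal
  have hval : (Complex.cos ((Real.pi : ℂ) * (z + (R₀ : ℂ) * e - (c : ℂ))) *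
      ((Real.pi : ℂ) * (1 * e))).re = Dfun c z R₀ t := by
    unfold Dfun
    rw [if_pos h]
    congr 1
    ring
  rw [hval] at hRe
  apply hRe.congr_of_eventuallyEq
  have hopen : IsOpen {R : ℝ | (z + (R : ℂ) * e).re ∈ Set.Ioo c (c + 1)} := by
    have hcont : Continuous (fun R : ℝ => (z + (R : ℂ) * e).re) :=
      Complex.continuous_re.comp (continuous_const.add (Complex.continuous_ofReal.mul
        continuous_const))
    exact hcont.isOpen_preimage _ isOpen_Ioo
  filter_upwards [hopen.mem_nhds h] with R hR'
  exact bfun_eq_sin_re c _ hR'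

lemma hasDeriv_out (c : ℝ) (z : ℂ) (t R₀ : ℝ)
    (h : (z + (R₀ : ℂ) * Complex.exp (Complex.I * t)).re < c ∨
         c + 1 < (z + (R₀ : ℂ) * Complex.exp (Complex.I * t)).re) :
    HasDerivAt (fun R : ℝ => bfun c (z + (R : ℂ) * Complex.exp (Complex.I * t)))
      (Dfun c z R₀ t) R₀ := by
  set e := Complex.exp (Complex.I * t) with he
  have hcont : Continuous (fun R : ℝ => (z + (R : ℂ) * e).re) :=
    Complex.continuous_re.comp (continuous_const.add (Complex.continuous_ofReal.mul
      continuous_const))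
  have hD : Dfun c z R₀ t = 0 := by
    unfold Dfun
    rw [if_neg]
    intro hmem
    rcases h with h' | h'
    · exact absurd hmem.1 (by linarith)
    · exact absurd hmem.2 (by linarith)
  rw [hD]
  apply (hasDerivAt_const R₀ (0 : ℝ)).congr_of_eventuallyEq
  rcases h with h' | h'
  · have hopen : IsOpen {R : ℝ | (z + (R : ℂ) * e).re < c} :=
      hcont.isOpen_preimage _ isOpen_Iio
    filter_upwards [hopen.mem_nhds h'] with R hR'
    unfold bfun
    rw [if_neg]
    intro hmem
    exact absurd hmem.1 (by simpa using hR'.le.not_gt)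
  · have hopen : IsOpen {R : ℝ | c + 1 < (z + (R : ℂ) * e).re} :=
      hcont.isOpen_preimage _ isOpen_Ioi
    filter_upwards [hopen.mem_nhds h'] with R hR'
    unfold bfun
    rw [if_neg]
    intro hmem
    exact absurd hmem.2 (by simpa using hR'.le.not_gt)

lemma cos_fiber_countable (a : ℝ) : Set.Countable {t : ℝ | Real.cos t = a} := by
  by_cases ha : |a| ≤ 1
  · have h1 : -1 ≤ a := (abs_le.mp ha).1
    have h2 : a ≤ 1 := (abs_le.mp ha).2
    have hsub : {t : ℝ | Real.cos t = a} ⊆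
        ⋃ k : ℤ, ({Real.arccos a - 2 * k * Real.pi} ∪ {2 * k * Real.pi - Real.arccos a}) := by
      intro t ht
      have : Real.cos t = Real.cos (Real.arccos a) := by
        rw [Real.cos_arccos h1 h2]; exact ht
      rcases Real.cos_eq_cos_iff.mp this with ⟨k, hk | hk⟩
      · exact Set.mem_iUnion.mpr ⟨k, Or.inl (by simp; linarith)⟩
      · exact Set.mem_iUnion.mpr ⟨k, Or.inr (by simp; linarith)⟩
    exact Set.Countable.mono hsub (Set.countable_iUnion fun k =>
      (Set.countable_singleton _).union (Set.countable_singleton _))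
  · have : {t : ℝ | Real.cos t = a} = ∅ := by
      ext t
      simp only [Set.mem_setOf_eq, Set.mem_empty_iff_false, iff_false]
      intro ht
      apply ha
      rw [← ht]
      exact Real.abs_cos_le_one t
    rw [this]
    exact Set.countable_empty

lemma path_continuous (z : ℂ) (R : ℝ) :
    Continuous (fun t : ℝ => z + (R : ℂ) * Complex.exp (Complex.I * t)) :=
  continuous_const.add (continuous_const.mul (Complex.continuous_exp.comp
    (continuous_const.mul Complex.continuous_ofReal)))

lemma Dfun_integrand_continuous (c : ℝ) (z : ℂ) (R₀ : ℝ) :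
    Continuous (fun t : ℝ => ((Real.pi : ℂ) * Complex.cos ((Real.pi : ℂ) *
      (z + (R₀ : ℂ) * Complex.exp (Complex.I * t) - (c : ℂ))) *
      Complex.exp (Complex.I * t)).re) := by
  apply Complex.continuous_re.comp
  apply Continuous.mul
  · exact continuous_const.mul (Complex.continuous_cos.comp
      (continuous_const.mul ((path_continuous z R₀).sub continuous_const)))
  · exact Complex.continuous_exp.comp (continuous_const.mul Complex.continuous_ofReal)

lemma abs_exp_I_mul (t : ℝ) : ‖Complex.exp (Complex.I * t)‖ = 1 := by
  rw [mul_comm]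
  exact Complex.norm_exp_ofReal_mul_I t

lemma Mfun_hasDeriv (c : ℝ) (z : ℂ) (R₀ : ℝ) (hR₀ : 0 < R₀) :
    HasDerivAt (fun R : ℝ => ∫ t in (0 : ℝ)..(2 * Real.pi),
        bfun c (z + (R : ℂ) * Complex.exp (Complex.I * t)))
      (∫ t in (0 : ℝ)..(2 * Real.pi), Dfun c z R₀ t) R₀ := by
  set B := |z.im| + |R₀| + 1 with hBdef
  have hB : 0 ≤ B := by positivity
  set K := 2 * Real.pi * Real.cosh (Real.pi * B) with hKdef
  have hK : 0 ≤ K := by positivity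
  have intc : ∀ R : ℝ, Continuous (fun t : ℝ =>
      bfun c (z + (R : ℂ) * Complex.exp (Complex.I * t))) :=
    fun R => (bfun_continuous c).comp (path_continuous z R)
  have hmeas' : AEStronglyMeasurable (Dfun c z R₀)
      (MeasureTheory.volume.restrict (Ι (0 : ℝ) (2 * Real.pi))) := by
    have hs : MeasurableSet {t : ℝ |
        (z + (R₀ : ℂ) * Complex.exp (Complex.I * t)).re ∈ Set.Ioo c (c + 1)} :=
      ((Complex.continuous_re.comp (path_continuous z R₀)).isOpen_preimage _
        isOpen_Ioo).measurableSet
    exact ((Dfun_integrand_continuous c z R₀).measurable.ite hs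
      measurable_const).aestronglyMeasurable.restrict
  have hlip : ∀ᵐ t ∂(MeasureTheory.volume : MeasureTheory.Measure ℝ), t ∈ Ι (0:ℝ) (2 * Real.pi) →
      LipschitzOnWith (Real.nnabs K)
        (fun R : ℝ => bfun c (z + (R : ℂ) * Complex.exp (Complex.I * t))) (ball R₀ 1) := by
    apply Filter.Eventually.of_forall
    intro t _
    rw [lipschitzOnWith_iff_dist_le_mul]
    intro R hR R' hR'
    have him : ∀ S : ℝ, S ∈ ball R₀ 1 →
        |(z + (S : ℂ) * Complex.exp (Complex.I * t)).im| ≤ B := by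
      intro S hS
      rw [path_im]
      have h1 : |S| ≤ |R₀| + 1 := by
        have := mem_ball_iff_norm.mp hS
        rw [Real.norm_eq_abs] at this
        calc |S| = |R₀ + (S - R₀)| := by ring_nf
          _ ≤ |R₀| + |S - R₀| := abs_add_le _ _
          _ ≤ |R₀| + 1 := by linarith
      calc |z.im + S * Real.sin t| ≤ |z.im| + |S * Real.sin t| := abs_add_le _ _
        _ ≤ |z.im| + |S| * 1 := by
            rw [abs_mul]
            exact add_le_add_right (mul_le_mul_of_nonneg_left (Real.abs_sin_le_one t) (abs_nonneg S)) _
        _ ≤ B := by rw [hBdef]; linarith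
    have hd := bfun_dist c B hB _ _ (him R hR) (him R' hR')
    have habs : ‖(z + (R : ℂ) * Complex.exp (Complex.I * t)) -
        (z + (R' : ℂ) * Complex.exp (Complex.I * t))‖ = |R - R'| := by
      have : (z + (R : ℂ) * Complex.exp (Complex.I * t)) -
          (z + (R' : ℂ) * Complex.exp (Complex.I * t)) =
          ((R - R' : ℝ) : ℂ) * Complex.exp (Complex.I * t) := by
        push_cast; ring
      rw [this, norm_mul, Complex.norm_real, Real.norm_eq_abs, abs_exp_I_mul, mul_one]
    rw [Real.dist_eq, Real.dist_eq]
    calc |bfun c (z + (R : ℂ) * Complex.exp (Complex.I * t)) -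
        bfun c (z + (R' : ℂ) * Complex.exp (Complex.I * t))| ≤ K * |R - R'| := by
          rw [← habs]; exact hd
      _ ≤ (Real.nnabs K : ℝ) * |R - R'| := by
          apply mul_le_mul_of_nonneg_right _ (abs_nonneg _)
          rw [Real.coe_nnabs]
          exact le_abs_self K
  have hdiff : ∀ᵐ t ∂(MeasureTheory.volume : MeasureTheory.Measure ℝ),
      t ∈ Ι (0:ℝ) (2 * Real.pi) →
      HasDerivAt (fun R : ℝ => bfun c (z + (R : ℂ) * Complex.exp (Complex.I * t)))
        (Dfun c z R₀ t) R₀ := by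
    set N := {t : ℝ | Real.cos t = (c - z.re) / R₀} ∪
        {t : ℝ | Real.cos t = (c + 1 - z.re) / R₀} with hNdef
    have hNnull : MeasureTheory.volume N = 0 :=
      Set.Countable.measure_zero ((cos_fiber_countable _).union (cos_fiber_countable _)) _
    have hae : ∀ᵐ t ∂(MeasureTheory.volume : MeasureTheory.Measure ℝ), t ∉ N :=
      MeasureTheory.measure_eq_zero_iff_ae_notMem.mp hNnull
    filter_upwards [hae] with t ht _
    have hre : (z + (R₀ : ℂ) * Complex.exp (Complex.I * t)).re = z.re + R₀ * Real.cos t :=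
      path_re z R₀ t
    have hne1 : (z + (R₀ : ℂ) * Complex.exp (Complex.I * t)).re ≠ c := by
      rw [hre]
      intro hc
      apply ht
      left
      show Real.cos t = (c - z.re) / R₀
      field_simp
      linarith
    have hne2 : (z + (R₀ : ℂ) * Complex.exp (Complex.I * t)).re ≠ c + 1 := by
      rw [hre]
      intro hc
      apply ht
      right
      show Real.cos t = (c + 1 - z.re) / R₀
      field_simp
      linarith
    rcases lt_trichotomy (z + (R₀ : ℂ) * Complex.exp (Complex.I * t)).re c with h1 | h1 | h1
    · exact hasDeriv_out c z t R₀ (Or.inl h1)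
    · exact absurd h1 hne1
    · rcases lt_trichotomy (z + (R₀ : ℂ) * Complex.exp (Complex.I * t)).re (c + 1)
        with h2 | h2 | h2
      · exact hasDeriv_inStrip c z t R₀ ⟨h1, h2⟩
      · exact absurd h2 hne2
      · exact hasDeriv_out c z t R₀ (Or.inr h2)
  exact (intervalIntegral.hasDerivAt_integral_of_dominated_loc_of_lip (Metric.ball_mem_nhds R₀ one_pos)
    (Filter.Eventually.of_forall fun R => ((intc R).aestronglyMeasurable).restrict)
    ((intc R₀).intervalIntegrable _ _) hmeas' hlip
    (intervalIntegrable_const) hdiff).2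

lemma psi_hasDeriv (c : ℝ) (z : ℂ) (R₀ : ℝ) (hR₀ : 0 < R₀) (t : ℝ) :
    HasDerivAt (fun t : ℝ => (1 / R₀) *
        (Complex.sin ((Real.pi : ℂ) * (z + (R₀ : ℂ) * Complex.exp (Complex.I * t) - (c : ℂ)))).im)
      (((Real.pi : ℂ) * Complex.cos ((Real.pi : ℂ) *
          (z + (R₀ : ℂ) * Complex.exp (Complex.I * t) - (c : ℂ))) *
        Complex.exp (Complex.I * t)).re) t := by
  have hw : ∀ w : ℂ, HasDerivAt (fun w : ℂ => Complex.I * w) Complex.I w := by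
    intro w
    simpa using (hasDerivAt_id w).const_mul Complex.I
  have hexp : ∀ w : ℂ, HasDerivAt (fun w : ℂ => Complex.exp (Complex.I * w))
      (Complex.exp (Complex.I * w) * Complex.I) w := by
    intro w
    exact (Complex.hasDerivAt_exp _).comp w (hw w)
  have hinner : ∀ w : ℂ, HasDerivAt
      (fun w : ℂ => (Real.pi : ℂ) * (z + (R₀ : ℂ) * Complex.exp (Complex.I * w) - (c : ℂ)))
      ((Real.pi : ℂ) * ((R₀ : ℂ) * (Complex.exp (Complex.I * w) * Complex.I))) w := by
    intro w
    exact ((((hexp w).const_mul (R₀ : ℂ)).const_add z).sub_const (c : ℂ)).const_mul _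
  have hsin : ∀ w : ℂ, HasDerivAt
      (fun w : ℂ => Complex.sin ((Real.pi : ℂ) * (z + (R₀ : ℂ) * Complex.exp (Complex.I * w) - (c : ℂ))))
      (Complex.cos ((Real.pi : ℂ) * (z + (R₀ : ℂ) * Complex.exp (Complex.I * w) - (c : ℂ))) *
        ((Real.pi : ℂ) * ((R₀ : ℂ) * (Complex.exp (Complex.I * w) * Complex.I)))) w := by
    intro w
    exact (Complex.hasDerivAt_sin _).comp w (hinner w)
  have hreal := (hsin (t : ℂ)).comp_ofReal (z := t)
  have him := hreal.cimag.const_mul (1 / R₀)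
  refine him.congr_deriv ?_
  symm
  have hA : Complex.cos ((Real.pi : ℂ) * (z + (R₀ : ℂ) * Complex.exp (Complex.I * t) - (c : ℂ))) *
      ((Real.pi : ℂ) * ((R₀ : ℂ) * (Complex.exp (Complex.I * t) * Complex.I))) =
      (R₀ : ℂ) * (((Real.pi : ℂ) * Complex.cos ((Real.pi : ℂ) *
        (z + (R₀ : ℂ) * Complex.exp (Complex.I * t) - (c : ℂ))) *
        Complex.exp (Complex.I * t)) * Complex.I) := by ring
  rw [hA]
  have h1 : ∀ w : ℂ, ((R₀ : ℂ) * w).im = R₀ * w.im := by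
    intro w
    simp [Complex.mul_im]
  rw [h1, Complex.mul_I_im]
  field_simp

lemma psi_eval (c : ℝ) (z : ℂ) (R₀ : ℝ) (t : ℝ) :
    (1 / R₀) * (Complex.sin ((Real.pi : ℂ) *
        (z + (R₀ : ℂ) * Complex.exp (Complex.I * t) - (c : ℂ)))).im =
      (1 / R₀) * (Real.cos (Real.pi * (z.re + R₀ * Real.cos t - c)) *
        Real.sinh (Real.pi * (z.im + R₀ * Real.sin t))) := by
  rw [csin_im, pi_mul_re, pi_mul_im, path_re, path_im]

set_option maxHeartbeats 1000000 in
lemma Dfun_integral_nonneg (c : ℝ) (z : ℂ) (hz : z.re ∈ Set.Ioo c (c + 1))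
    (R₀ : ℝ) (hR₀ : 0 < R₀) :
    0 ≤ ∫ t in (0 : ℝ)..(2 * Real.pi), Dfun c z R₀ t := by
  have hπ := Real.pi_pos
  set p : ℝ := (c - z.re) / R₀ with hpdef
  set q : ℝ := (c + 1 - z.re) / R₀ with hqdef
  have hp : p < 0 := div_neg_of_neg_of_pos (by linarith [hz.1]) hR₀
  have hq : 0 < q := div_pos (by linarith [hz.2]) hR₀
  set p' : ℝ := max p (-1) with hp'def
  set q' : ℝ := min q 1 with hq'def
  have hp'1 : -1 ≤ p' := le_max_right _ _
  have hp'0 : p' ≤ 0 := max_le hp.le (by norm_num)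
  have hq'0 : 0 < q' := lt_min hq one_pos
  have hq'1 : q' ≤ 1 := min_le_right _ _
  set t1 : ℝ := Real.arccos q' with ht1def
  set t3 : ℝ := Real.arccos p' with ht3def
  set t4 : ℝ := 2 * Real.pi - t3 with ht4def
  set t2 : ℝ := 2 * Real.pi - t1 with ht2def
  have hcos1 : Real.cos t1 = q' := Real.cos_arccos (by linarith) hq'1
  have hcos3 : Real.cos t3 = p' := Real.cos_arccos hp'1 (by linarith)
  have h0t1 : 0 ≤ t1 := Real.arccos_nonneg _
  have ht1pi : t1 ≤ Real.pi := Real.arccos_le_pi _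
  have h0t3 : 0 ≤ t3 := Real.arccos_nonneg _
  have ht3pi : t3 ≤ Real.pi := Real.arccos_le_pi _
  have ht1t3 : t1 ≤ t3 := by
    by_contra hcon
    push_neg at hcon
    have := Real.strictAntiOn_cos ⟨h0t3, ht3pi⟩ ⟨h0t1, ht1pi⟩ hcon
    rw [hcos1, hcos3] at this
    linarith
  have ht3t4 : t3 ≤ t4 := by rw [ht4def]; linarith
  have ht4t2 : t4 ≤ t2 := by rw [ht4def, ht2def]; linarith
  have ht2le : t2 ≤ 2 * Real.pi := by rw [ht2def]; linarith
  set D : ℝ → ℝ := Dfun c z R₀ with hDdef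
  set f : ℝ → ℝ := fun t => ((Real.pi : ℂ) * Complex.cos ((Real.pi : ℂ) *
      (z + (R₀ : ℂ) * Complex.exp (Complex.I * t) - (c : ℂ))) *
      Complex.exp (Complex.I * t)).re with hfdef
  set ψ : ℝ → ℝ := fun t => (1 / R₀) *
      (Complex.sin ((Real.pi : ℂ) * (z + (R₀ : ℂ) * Complex.exp (Complex.I * t) - (c : ℂ)))).im
      with hψdef
  have fcont : Continuous f := Dfun_integrand_continuous c z R₀
  have hψd : ∀ t : ℝ, HasDerivAt ψ (f t) t := fun t => psi_hasDeriv c z R₀ hR₀ t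
  -- interval integrability of D
  have hS : MeasurableSet {t : ℝ |
      (z + (R₀ : ℂ) * Complex.exp (Complex.I * t)).re ∈ Set.Ioo c (c + 1)} :=
    ((Complex.continuous_re.comp (path_continuous z R₀)).isOpen_preimage _
      isOpen_Ioo).measurableSet
  have hDind : D = Set.indicator {t : ℝ |
      (z + (R₀ : ℂ) * Complex.exp (Complex.I * t)).re ∈ Set.Ioo c (c + 1)} f := by
    funext t
    rw [Set.indicator_apply]
    rfl
  have hDint : ∀ a b : ℝ, IntervalIntegrable D MeasureTheory.volume a b := by
    intro a b
    rw [hDind, intervalIntegrable_iff]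
    exact ((intervalIntegrable_iff.mp (fcont.intervalIntegrable a b))).indicator hS
  -- basic facts about the position of the circle
  have hre : ∀ t : ℝ, (z + (R₀ : ℂ) * Complex.exp (Complex.I * t)).re
      = z.re + R₀ * Real.cos t := fun t => path_re z R₀ t
  have hin : ∀ t : ℝ, p' < Real.cos t → Real.cos t < q' →
      (z + (R₀ : ℂ) * Complex.exp (Complex.I * t)).re ∈ Set.Ioo c (c + 1) := by
    intro t hgt hlt
    rw [hre t]
    constructor
    · have h1 : p ≤ p' := le_max_left _ _
      have h2 : R₀ * p < R₀ * Real.cos t := by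
        apply mul_lt_mul_of_pos_left _ hR₀
        linarith
      have h3 : R₀ * p = c - z.re := by
        rw [hpdef]; field_simp
      linarith
    · have h1 : q' ≤ q := min_le_left _ _
      have h2 : R₀ * Real.cos t < R₀ * q := by
        apply mul_lt_mul_of_pos_left _ hR₀
        linarith
      have h3 : R₀ * q = c + 1 - z.re := by
        rw [hqdef]; field_simp
      linarith
  -- pieces
  have hI1 : ∫ t in (0 : ℝ)..t1, D t = 0 := by
    by_cases hq1 : q ≤ 1
    · have hq'q : q' = q := min_eq_left hq1
      rw [intervalIntegral.integral_congr (g := fun _ => (0 : ℝ)), intervalIntegral.integral_zero]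
      intro t ht
      rw [Set.uIcc_of_le h0t1] at ht
      have hcge : q' ≤ Real.cos t := by
        rw [← hcos1]
        exact Real.cos_le_cos_of_nonneg_of_le_pi ht.1 ht1pi ht.2
      show D t = 0
      rw [hDdef]
      unfold Dfun
      rw [if_neg]
      intro hmem
      have : c + 1 ≤ (z + (R₀ : ℂ) * Complex.exp (Complex.I * t)).re := by
        rw [hre t]
        have h2 : R₀ * q ≤ R₀ * Real.cos t :=
          mul_le_mul_of_nonneg_left (by rw [← hq'q]; exact hcge) hR₀.le
        have h3 : R₀ * q = c + 1 - z.re := by rw [hqdef]; field_simp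
        linarith
      exact absurd hmem.2 (not_lt.mpr this)
    · push_neg at hq1
      have : q' = 1 := min_eq_right hq1.le
      have ht10 : t1 = 0 := by rw [ht1def, this, Real.arccos_one]
      rw [ht10, intervalIntegral.integral_same]
  have haet : ∀ s : ℝ, ∀ᵐ t : ℝ ∂(MeasureTheory.volume), t ≠ s := by
    intro s
    have h0 : (MeasureTheory.volume : MeasureTheory.Measure ℝ) {s} = 0 :=
      MeasureTheory.measure_singleton s
    filter_upwards [MeasureTheory.measure_eq_zero_iff_ae_notMem.mp h0] with t ht
    simpa using ht
  have hI2 : ∫ t in t1..t3, D t = ψ t3 - ψ t1 := by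
    have hcong : ∫ t in t1..t3, D t = ∫ t in t1..t3, f t := by
      apply intervalIntegral.integral_congr_ae
      filter_upwards [haet t3] with t hne hmem
      rw [Set.uIoc_of_le ht1t3] at hmem
      have htlt : t < t3 := lt_of_le_of_ne hmem.2 hne
      have htpi : t ≤ Real.pi := le_trans hmem.2 ht3pi
      have h0t : 0 ≤ t := le_trans h0t1 hmem.1.le
      have hclt : Real.cos t < q' := by
        rw [← hcos1]
        exact Real.strictAntiOn_cos ⟨h0t1, ht1pi⟩ ⟨h0t, htpi⟩ hmem.1
      have hcgt : p' < Real.cos t := by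
        rw [← hcos3]
        exact Real.strictAntiOn_cos ⟨h0t, htpi⟩ ⟨h0t3, ht3pi⟩ htlt
      show D t = f t
      rw [hDdef]
      unfold Dfun
      rw [if_pos (hin t hcgt hclt)]
    rw [hcong]
    exact intervalIntegral.integral_eq_sub_of_hasDerivAt (fun t _ => hψd t)
      (fcont.intervalIntegrable _ _)
  have hI3 : ∫ t in t3..t4, D t = 0 := by
    by_cases hp1 : -1 ≤ p
    · have hp'p : p' = p := max_eq_left hp1
      rw [intervalIntegral.integral_congr (g := fun _ => (0 : ℝ)), intervalIntegral.integral_zero]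
      intro t ht
      rw [Set.uIcc_of_le ht3t4] at ht
      have hcle : Real.cos t ≤ p' := by
        rcases le_total t Real.pi with hcase | hcase
        · rw [← hcos3]
          exact Real.cos_le_cos_of_nonneg_of_le_pi h0t3 hcase ht.1
        · have heq : Real.cos t = Real.cos (2 * Real.pi - t) := by
            have := Real.cos_two_pi_sub (2 * Real.pi - t)
            rw [show 2 * Real.pi - (2 * Real.pi - t) = t by ring] at this
            exact this
          rw [heq, ← hcos3]
          exact Real.cos_le_cos_of_nonneg_of_le_pi h0t3 (by linarith)
            (by rw [ht4def] at ht; linarith [ht.2])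
      show D t = 0
      rw [hDdef]
      unfold Dfun
      rw [if_neg]
      intro hmem
      have : (z + (R₀ : ℂ) * Complex.exp (Complex.I * t)).re ≤ c := by
        rw [hre t]
        have h2 : R₀ * Real.cos t ≤ R₀ * p :=
          mul_le_mul_of_nonneg_left (by rw [← hp'p]; exact hcle) hR₀.le
        have h3 : R₀ * p = c - z.re := by rw [hpdef]; field_simp
        linarith
      exact absurd hmem.1 (not_lt.mpr this)
    · push_neg at hp1
      have : p' = -1 := max_eq_right hp1.le
      have ht3pi' : t3 = Real.pi := by rw [ht3def, this, Real.arccos_neg_one]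
      have : t4 = t3 := by rw [ht4def, ht3pi']; ring
      rw [this, intervalIntegral.integral_same]
  have hI4 : ∫ t in t4..t2, D t = ψ t2 - ψ t4 := by
    have hcong : ∫ t in t4..t2, D t = ∫ t in t4..t2, f t := by
      apply intervalIntegral.integral_congr_ae
      filter_upwards [haet t2] with t hne hmem
      rw [Set.uIoc_of_le ht4t2] at hmem
      have htlt : t < t2 := lt_of_le_of_ne hmem.2 hne
      set s : ℝ := 2 * Real.pi - t with hsdef
      have hs1 : t1 < s := by rw [hsdef, ht2def] at *; linarith
      have hs3 : s < t3 := by rw [hsdef, ht4def] at *; linarith [hmem.1]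
      have heq : Real.cos t = Real.cos s := by
        have := Real.cos_two_pi_sub s
        rw [show 2 * Real.pi - s = t by rw [hsdef]; ring] at this
        exact this
      have h0s : 0 ≤ s := le_trans h0t1 hs1.le
      have hspi : s ≤ Real.pi := le_trans hs3.le ht3pi
      have hclt : Real.cos t < q' := by
        rw [heq, ← hcos1]
        exact Real.strictAntiOn_cos ⟨h0t1, ht1pi⟩ ⟨h0s, hspi⟩ hs1
      have hcgt : p' < Real.cos t := by
        rw [heq, ← hcos3]
        exact Real.strictAntiOn_cos ⟨h0s, hspi⟩ ⟨h0t3, ht3pi⟩ hs3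
      show D t = f t
      rw [hDdef]
      unfold Dfun
      rw [if_pos (hin t hcgt hclt)]
    rw [hcong]
    exact intervalIntegral.integral_eq_sub_of_hasDerivAt (fun t _ => hψd t)
      (fcont.intervalIntegrable _ _)
  have hI5 : ∫ t in t2..(2 * Real.pi), D t = 0 := by
    by_cases hq1 : q ≤ 1
    · have hq'q : q' = q := min_eq_left hq1
      rw [intervalIntegral.integral_congr (g := fun _ => (0 : ℝ)), intervalIntegral.integral_zero]
      intro t ht
      rw [Set.uIcc_of_le ht2le] at ht
      have heq : Real.cos t = Real.cos (2 * Real.pi - t) := by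
        have := Real.cos_two_pi_sub (2 * Real.pi - t)
        rw [show 2 * Real.pi - (2 * Real.pi - t) = t by ring] at this
        exact this
      have hcge : q' ≤ Real.cos t := by
        rw [heq, ← hcos1]
        exact Real.cos_le_cos_of_nonneg_of_le_pi (by linarith [ht.2]) ht1pi
          (by rw [ht2def] at ht; linarith [ht.1])
      show D t = 0
      rw [hDdef]
      unfold Dfun
      rw [if_neg]
      intro hmem
      have : c + 1 ≤ (z + (R₀ : ℂ) * Complex.exp (Complex.I * t)).re := by
        rw [hre t]
        have h2 : R₀ * q ≤ R₀ * Real.cos t :=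
          mul_le_mul_of_nonneg_left (by rw [← hq'q]; exact hcge) hR₀.le
        have h3 : R₀ * q = c + 1 - z.re := by rw [hqdef]; field_simp
        linarith
      exact absurd hmem.2 (not_lt.mpr this)
    · push_neg at hq1
      have : q' = 1 := min_eq_right hq1.le
      have ht10 : t1 = 0 := by rw [ht1def, this, Real.arccos_one]
      have ht22 : t2 = 2 * Real.pi := by rw [ht2def, ht10]; ring
      rw [ht22, intervalIntegral.integral_same]
  -- combine
  have hsplit : ∫ t in (0 : ℝ)..(2 * Real.pi), D t =
      (∫ t in (0 : ℝ)..t1, D t) + (∫ t in t1..t3, D t) + (∫ t in t3..t4, D t) +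
      (∫ t in t4..t2, D t) + (∫ t in t2..(2 * Real.pi), D t) := by
    rw [intervalIntegral.integral_add_adjacent_intervals (hDint 0 t1) (hDint t1 t3),
      intervalIntegral.integral_add_adjacent_intervals (hDint 0 t3) (hDint t3 t4),
      intervalIntegral.integral_add_adjacent_intervals (hDint 0 t4) (hDint t4 t2),
      intervalIntegral.integral_add_adjacent_intervals (hDint 0 t2) (hDint t2 (2 * Real.pi))]
  -- evaluate ψ differences
  have hcos_t4 : Real.cos t4 = p' := by
    rw [ht4def, Real.cos_two_pi_sub, hcos3]
  have hsin_t3 : Real.sin t3 = Real.sqrt (1 - p' ^ 2) := by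
    rw [ht3def]; exact Real.sin_arccos p'
  have hsin_t4 : Real.sin t4 = -Real.sqrt (1 - p' ^ 2) := by
    rw [ht4def, Real.sin_two_pi_sub, hsin_t3]
  have hcos_t2 : Real.cos t2 = q' := by
    rw [ht2def, Real.cos_two_pi_sub, hcos1]
  have hsin_t1 : Real.sin t1 = Real.sqrt (1 - q' ^ 2) := by
    rw [ht1def]; exact Real.sin_arccos q'
  have hsin_t2 : Real.sin t2 = -Real.sqrt (1 - q' ^ 2) := by
    rw [ht2def, Real.sin_two_pi_sub, hsin_t1]
  have hψ34 : 0 ≤ ψ t3 - ψ t4 := by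
    rw [hψdef]
    simp only
    rw [psi_eval c z R₀ t3, psi_eval c z R₀ t4, hcos_t4, hsin_t3, hsin_t4, hcos3]
    by_cases hp1 : -1 ≤ p
    · have hp'p : p' = p := max_eq_left hp1
      have harg : z.re + R₀ * p' - c = 0 := by
        rw [hp'p, hpdef]; field_simp; ring
      rw [harg, mul_zero, Real.cos_zero, one_mul, one_mul]
      have hs0 : 0 ≤ Real.sqrt (1 - p' ^ 2) := Real.sqrt_nonneg _
      have hmul : R₀ * -Real.sqrt (1 - p' ^ 2) ≤ R₀ * Real.sqrt (1 - p' ^ 2) :=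
        mul_le_mul_of_nonneg_left (neg_le_self hs0) hR₀.le
      have hmono : Real.sinh (Real.pi * (z.im + R₀ * -Real.sqrt (1 - p' ^ 2))) ≤
          Real.sinh (Real.pi * (z.im + R₀ * Real.sqrt (1 - p' ^ 2))) := by
        apply Real.sinh_le_sinh.mpr
        apply mul_le_mul_of_nonneg_left _ Real.pi_pos.le
        linarith
      have h1R : 0 < 1 / R₀ := by positivity
      have := mul_le_mul_of_nonneg_left hmono h1R.le
      linarith
    · push_neg at hp1
      have hp'm : p' = -1 := max_eq_right hp1.le
      have : Real.sqrt (1 - p' ^ 2) = 0 := by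
        rw [hp'm]; norm_num
      rw [this]
      norm_num
  have hψ21 : 0 ≤ ψ t2 - ψ t1 := by
    rw [hψdef]
    simp only
    rw [psi_eval c z R₀ t2, psi_eval c z R₀ t1, hcos_t2, hsin_t2, hsin_t1, hcos1]
    by_cases hq1 : q ≤ 1
    · have hq'q : q' = q := min_eq_left hq1
      have harg : z.re + R₀ * q' - c = 1 := by
        rw [hq'q, hqdef]; field_simp; ring
      rw [harg, mul_one, Real.cos_pi]
      have hs0 : 0 ≤ Real.sqrt (1 - q' ^ 2) := Real.sqrt_nonneg _
      have hmul : R₀ * -Real.sqrt (1 - q' ^ 2) ≤ R₀ * Real.sqrt (1 - q' ^ 2) :=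
        mul_le_mul_of_nonneg_left (neg_le_self hs0) hR₀.le
      have hmono : Real.sinh (Real.pi * (z.im + R₀ * -Real.sqrt (1 - q' ^ 2))) ≤
          Real.sinh (Real.pi * (z.im + R₀ * Real.sqrt (1 - q' ^ 2))) := by
        apply Real.sinh_le_sinh.mpr
        apply mul_le_mul_of_nonneg_left _ Real.pi_pos.le
        linarith
      have h1R : 0 < 1 / R₀ := by positivity
      have := mul_le_mul_of_nonneg_left hmono h1R.le
      linarith
    · push_neg at hq1
      have hq'o : q' = 1 := min_eq_right hq1.le
      have : Real.sqrt (1 - q' ^ 2) = 0 := by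
        rw [hq'o]; norm_num
      rw [this]
      norm_num
  rw [hsplit, hI1, hI2, hI3, hI4, hI5]
  linarith

end Aux

section Final

open Set MeasureTheory Metric intervalIntegral

lemma bfun_small_radius (c : ℝ) (z : ℂ) (ρ : ℝ) (h1 : 0 < ρ) (h2 : ρ ≤ 1) :
    2 * Real.pi * bfun c z ≤
      (∫ t in (0 : ℝ)..(2 * Real.pi), bfun c (z + (ρ : ℂ) * Complex.exp (Complex.I * t))) +
        2 * Real.pi * (2 * Real.pi * Real.cosh (Real.pi * (|z.im| + 1)) * ρ) := by
  set B : ℝ := |z.im| + 1 with hBdef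
  have hB : 0 ≤ B := by positivity
  set K : ℝ := 2 * Real.pi * Real.cosh (Real.pi * B) with hKdef
  have hK : 0 ≤ K := by positivity
  have hpt : ∀ t : ℝ, |bfun c (z + (ρ : ℂ) * Complex.exp (Complex.I * t)) - bfun c z| ≤ K * ρ := by
    intro t
    have him1 : |(z + (ρ : ℂ) * Complex.exp (Complex.I * t)).im| ≤ B := by
      rw [path_im]
      calc |z.im + ρ * Real.sin t| ≤ |z.im| + |ρ * Real.sin t| := abs_add_le _ _
        _ ≤ |z.im| + ρ * 1 := by
            rw [abs_mul, _root_.abs_of_pos h1]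
            exact add_le_add_right (mul_le_mul_of_nonneg_left (Real.abs_sin_le_one t) h1.le) _
        _ ≤ B := by rw [hBdef]; linarith
    have him2 : |z.im| ≤ B := by rw [hBdef]; linarith
    have habs : ‖(z + (ρ : ℂ) * Complex.exp (Complex.I * t)) - z‖ = ρ := by
      rw [show (z + (ρ : ℂ) * Complex.exp (Complex.I * t)) - z =
        (ρ : ℂ) * Complex.exp (Complex.I * t) by ring]
      rw [norm_mul, Complex.norm_real, Real.norm_eq_abs, abs_exp_I_mul, mul_one, _root_.abs_of_pos h1]
    have := bfun_dist c B hB _ z him1 him2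
    rw [habs] at this
    exact this
  have hconst : (2 : ℝ) * Real.pi * bfun c z = ∫ _ in (0 : ℝ)..(2 * Real.pi), bfun c z := by
    rw [intervalIntegral.integral_const, smul_eq_mul]
    ring
  have hcont : Continuous (fun t : ℝ => bfun c (z + (ρ : ℂ) * Complex.exp (Complex.I * t))) :=
    (bfun_continuous c).comp (path_continuous z ρ)
  have hsub : (∫ t in (0 : ℝ)..(2 * Real.pi),
        (bfun c (z + (ρ : ℂ) * Complex.exp (Complex.I * t)) - bfun c z)) =
      (∫ t in (0 : ℝ)..(2 * Real.pi), bfun c (z + (ρ : ℂ) * Complex.exp (Complex.I * t))) -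
        ∫ _ in (0 : ℝ)..(2 * Real.pi), bfun c z :=
    intervalIntegral.integral_sub (hcont.intervalIntegrable _ _)
      (intervalIntegrable_const)
  have hn : ‖∫ t in (0 : ℝ)..(2 * Real.pi),
      (bfun c (z + (ρ : ℂ) * Complex.exp (Complex.I * t)) - bfun c z)‖ ≤
      K * ρ * |2 * Real.pi - 0| := by
    apply intervalIntegral.norm_integral_le_of_norm_le_const
    intro t _
    rw [Real.norm_eq_abs]
    exact hpt t
  rw [Real.norm_eq_abs, hsub, ← hconst] at hn
  have habs2 : |2 * Real.pi - 0| = 2 * Real.pi := by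
    rw [sub_zero, _root_.abs_of_pos (by positivity)]
  rw [habs2] at hn
  have h := (abs_le.mp hn).1
  rw [hKdef] at h ⊢
  linarith

theorem stmt_8 (c : ℝ) : Subharmonic (bfun c) := by
  constructor
  · exact (bfun_continuous c).upperSemicontinuous
  · intro z R hR
    have h2π : (0 : ℝ) < 2 * Real.pi := by positivity
    have key : 2 * Real.pi * bfun c z ≤
        ∫ t in (0 : ℝ)..(2 * Real.pi), bfun c (z + (R : ℂ) * Complex.exp (Complex.I * t)) := by
      by_cases hz : z.re ∈ Set.Ioo c (c + 1)
      · -- z in the strip : use monotonicity of the circle average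
        set M : ℝ → ℝ := fun S => ∫ t in (0 : ℝ)..(2 * Real.pi),
            bfun c (z + (S : ℂ) * Complex.exp (Complex.I * t)) with hMdef
        have hderiv : ∀ S : ℝ, 0 < S →
            HasDerivAt M (∫ t in (0 : ℝ)..(2 * Real.pi), Dfun c z S t) S := by
          intro S hS
          rw [hMdef]
          exact Mfun_hasDeriv c z S hS
        have hmono : MonotoneOn M (Set.Ioi (0 : ℝ)) := by
          apply monotoneOn_of_deriv_nonneg (convex_Ioi 0)
          · exact fun S hS => (hderiv S hS).continuousAt.continuousWithinAt
          · intro S hS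
            rw [interior_Ioi] at hS
            exact (hderiv S hS).differentiableAt.differentiableWithinAt
          · intro S hS
            rw [interior_Ioi] at hS
            rw [(hderiv S hS).deriv]
            exact Dfun_integral_nonneg c z hz S hS
        set K : ℝ := 2 * Real.pi * Real.cosh (Real.pi * (|z.im| + 1)) with hKdef
        have hK : 0 ≤ K := by positivity
        by_contra hcon
        push_neg at hcon
        set ε : ℝ := 2 * Real.pi * bfun c z - M R with hεdef
        have hε : 0 < ε := by rw [hεdef, hMdef]; simp only; linarith
        set ρ : ℝ := min (min R 1) (ε / (2 * (2 * Real.pi * K + 1))) with hρdef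
        have hρpos : 0 < ρ := lt_min (lt_min hR one_pos) (by positivity)
        have hρ1 : ρ ≤ 1 := le_trans (min_le_left _ _) (min_le_right _ _)
        have hρR : ρ ≤ R := le_trans (min_le_left _ _) (min_le_left _ _)
        have hsmall := bfun_small_radius c z ρ hρpos hρ1
        have hMρ : M ρ ≤ M R := hmono (Set.mem_Ioi.mpr hρpos) (Set.mem_Ioi.mpr hR) hρR
        have hKρ : 2 * Real.pi * (K * ρ) ≤ ε / 2 := by
          have h1 : ρ ≤ ε / (2 * (2 * Real.pi * K + 1)) := min_le_right _ _
          have h2 : (0:ℝ) < 2 * (2 * Real.pi * K + 1) := by positivity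
          have h3 : 2 * Real.pi * K * ρ ≤
              2 * Real.pi * K * (ε / (2 * (2 * Real.pi * K + 1))) :=
            mul_le_mul_of_nonneg_left h1 (by positivity)
          have h4 : 2 * Real.pi * K * (ε / (2 * (2 * Real.pi * K + 1))) ≤ ε / 2 := by
            rw [mul_div_assoc', div_le_div_iff₀ h2 (by norm_num : (0:ℝ) < 2)]
            nlinarith [hε.le, hK, Real.pi_pos.le,
              mul_nonneg (mul_nonneg Real.pi_pos.le hK) hε.le]
          calc 2 * Real.pi * (K * ρ) = 2 * Real.pi * K * ρ := by ring
            _ ≤ ε / 2 := le_trans h3 h4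
        have hMρval : 2 * Real.pi * bfun c z ≤ M ρ + 2 * Real.pi * (K * ρ) := by
          rw [hMdef]
          simp only
          rw [hKdef]
          exact hsmall
        rw [hεdef] at hKρ
        linarith
      · -- z outside the strip : the value is 0 and the integrand is nonnegative
        have h0 : bfun c z = 0 := by unfold bfun; rw [if_neg hz]
        rw [h0, mul_zero]
        apply intervalIntegral.integral_nonneg h2π.le
        intro t _
        exact bfun_nonneg c _
    have hpos : (0 : ℝ) < 1 / (2 * Real.pi) := by positivity
    calc bfun c z = (1 / (2 * Real.pi)) * (2 * Real.pi * bfun c z) := by field_simp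
      _ ≤ (1 / (2 * Real.pi)) *
          ∫ t in (0 : ℝ)..(2 * Real.pi), bfun c (z + (R : ℂ) * Complex.exp (Complex.I * t)) :=
          mul_le_mul_of_nonneg_left key hpos.le

end Final
end

section
/- Let f be a non-monomial entire function. For every r > 0, the set {z : |z| = r and |f(z)| = max_{|w|=r} |f(w)|} is finite. -/
open Complex Filter Set Metric Bornology Topology

private lemma conj_comp_diff' {f : ℂ → ℂ} (hf : Differentiable ℂ f) :
    Differentiable ℂ (fun z => (starRingEnd ℂ) (f ((starRingEnd ℂ) z))) := by
  intro z
  set d := deriv f ((starRingEnd ℂ) z) with hd'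
  have hd : HasFDerivAt f (ContinuousLinearMap.smulRight (1 : ℂ →L[ℂ] ℂ) d)
      ((starRingEnd ℂ) z) := (hf _).hasDerivAt.hasFDerivAt
  have hconjfun : (fun w : ℂ => (starRingEnd ℂ) w) = ⇑Complex.conjCLE := by
    funext w; simp
  have hconj : ∀ w : ℂ, HasFDerivAt (fun w : ℂ => (starRingEnd ℂ) w)
      (Complex.conjCLE.toContinuousLinearMap) w := by
    rw [hconjfun]
    intro w
    exact Complex.conjCLE.toContinuousLinearMap.hasFDerivAt
  have h1 : HasFDerivAt (fun z => (starRingEnd ℂ) (f ((starRingEnd ℂ) z)))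
      ((Complex.conjCLE.toContinuousLinearMap.comp
        ((ContinuousLinearMap.smulRight (1 : ℂ →L[ℂ] ℂ) d).restrictScalars ℝ)).comp
        Complex.conjCLE.toContinuousLinearMap) z := by
    have hinner : HasFDerivAt (fun z : ℂ => f ((starRingEnd ℂ) z))
        (((ContinuousLinearMap.smulRight (1 : ℂ →L[ℂ] ℂ) d).restrictScalars ℝ).comp
          Complex.conjCLE.toContinuousLinearMap) z :=
      (hd.restrictScalars ℝ).comp z (hconj z)
    have := (hconj (f ((starRingEnd ℂ) z))).comp z hinner
    exact this
  have H : (ContinuousLinearMap.smulRight (1 : ℂ →L[ℂ] ℂ)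
      ((starRingEnd ℂ) d)).restrictScalars ℝ =
      (Complex.conjCLE.toContinuousLinearMap.comp
        ((ContinuousLinearMap.smulRight (1 : ℂ →L[ℂ] ℂ) d).restrictScalars ℝ)).comp
        Complex.conjCLE.toContinuousLinearMap := by
    ext w
    simp [mul_comm]
  exact (hasFDerivAt_of_restrictScalars ℝ h1 H).differentiableAt

theorem stmt_16 (f : ℂ → ℂ) (hf : Differentiable ℂ f)
    (hmon : ¬ ∃ (c : ℂ) (n : ℕ), f = fun z => c * z ^ n) :
    ∀ r : ℝ, 0 < r →
      {z : ℂ | ‖z‖ = r ∧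
        ∀ w : ℂ, ‖w‖ = r → ‖f w‖ ≤ ‖f z‖}.Finite := by
  intro r hr
  by_contra hfin
  set S := {z : ℂ | ‖z‖ = r ∧
      ∀ w : ℂ, ‖w‖ = r → ‖f w‖ ≤ ‖f z‖} with hSdef
  have hinf : S.Infinite := hfin
  have hsub : S ⊆ Metric.sphere (0 : ℂ) r := fun z hz => by
    simpa [Complex.dist_eq] using hz.1
  obtain ⟨z₀, hz₀sph, hacc⟩ :=
    hinf.exists_accPt_of_subset_isCompact (isCompact_sphere (0 : ℂ) r) hsub
  -- S is closed
  have hSclosed : IsClosed S := by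
    have : S = (fun z => ‖z‖) ⁻¹' {r} ∩
        ⋂ w ∈ {w : ℂ | ‖w‖ = r},
          {z | ‖f w‖ ≤ ‖f z‖} := by
      ext z
      simp only [hSdef, Set.mem_setOf_eq, Set.mem_inter_iff, Set.mem_preimage,
        Set.mem_singleton_iff, Set.mem_iInter]
    rw [this]
    refine (isClosed_singleton.preimage continuous_norm).inter ?_
    exact isClosed_biInter fun w hw =>
      isClosed_le continuous_const (continuous_norm.comp hf.continuous)
  have hz₀S : z₀ ∈ S := by
    have h1 : ClusterPt z₀ (𝓟 S) := hacc.clusterPt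
    have := mem_closure_iff_clusterPt.mpr h1
    rwa [hSclosed.closure_eq] at this
  have hfreq : ∃ᶠ z in 𝓝[≠] z₀, z ∈ S := by
    exact Filter.frequently_mem_iff_neBot.mpr hacc
  set M : ℝ := ‖f z₀‖ with hM
  have habsz₀ : ‖z₀‖ = r := hz₀S.1
  have hz₀ne : z₀ ≠ 0 := by
    intro h0; rw [h0, norm_zero] at habsz₀; exact hr.ne habsz₀
  have hSM : ∀ z ∈ S, ‖f z‖ = M := by
    intro z hz
    exact le_antisymm (hz₀S.2 z hz.1) (hz.2 z₀ habsz₀)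
  have hfa : AnalyticOnNhd ℂ f Set.univ := (hf.differentiableOn.analyticOnNhd isOpen_univ)
  -- M ≠ 0
  have hMne : M ≠ 0 := by
    intro hM0
    apply hmon
    refine ⟨0, 0, ?_⟩
    have h0 : EqOn f (fun _ => (0 : ℂ)) Set.univ := by
      apply AnalyticOnNhd.eqOn_of_preconnected_of_frequently_eq hfa
        (analyticOnNhd_const) isPreconnected_univ (Set.mem_univ z₀)
      refine hfreq.mono fun z hz => ?_
      have := hSM z hz
      rw [hM0] at this
      simpa using this
    funext z
    simpa using h0 (Set.mem_univ z)
  -- the reflected function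
  set h : ℂ → ℂ := fun z => (starRingEnd ℂ) (f ((starRingEnd ℂ) z)) with hhdef
  have hh : Differentiable ℂ h := conj_comp_diff' hf
  set U : Set ℂ := {(0 : ℂ)}ᶜ with hUdef
  have hUopen : IsOpen U := isOpen_compl_singleton
  have hUconn : IsPreconnected U := by
    have : (1 : Cardinal) < Module.rank ℝ ℂ := by
      rw [Complex.rank_real_complex]; norm_num
    exact (isConnected_compl_singleton_of_one_lt_rank this 0).isPreconnected
  set G : ℂ → ℂ := fun z => f z * h ((r : ℂ) ^ 2 / z) with hGdef
  have hGdiff : DifferentiableOn ℂ G U := by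
    apply DifferentiableOn.mul (hf.differentiableOn)
    apply DifferentiableOn.comp (hh.differentiableOn) _ (Set.mapsTo_univ _ _)
    exact DifferentiableOn.div (differentiableOn_const _) differentiableOn_id
      fun z hz => hz
  have hGa : AnalyticOnNhd ℂ G U := hGdiff.analyticOnNhd hUopen
  -- G = M^2 on U
  have hGconst : ∀ z ∈ U, G z = ((M ^ 2 : ℝ) : ℂ) := by
    apply AnalyticOnNhd.eqOn_of_preconnected_of_frequently_eq hGa analyticOnNhd_const
      hUconn (hz₀ne : z₀ ∈ U)
    refine hfreq.mono fun z hz => ?_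
    have habsz : ‖z‖ = r := hz.1
    have hzne : z ≠ 0 := by
      intro h0; rw [h0, norm_zero] at habsz; exact hr.ne habsz
    have hdiv : (r : ℂ) ^ 2 / z = (starRingEnd ℂ) z := by
      have h1 : (starRingEnd ℂ) z * z = ((r ^ 2 : ℝ) : ℂ) := by
        rw [mul_comm, Complex.mul_conj]
        norm_cast
        rw [← Complex.sq_norm, habsz]
      rw [div_eq_iff hzne, h1]
      norm_cast
    have : G z = f z * (starRingEnd ℂ) (f z) := by
      rw [hGdef]
      simp only []
      rw [hdiv, hhdef]
      simp
    rw [this, Complex.mul_conj]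
    rw [← hSM z hz]
    norm_cast
    rw [Complex.normSq_eq_norm_sq]
  have hGval : ∀ z : ℂ, z ≠ 0 → f z * h ((r : ℂ) ^ 2 / z) = ((M ^ 2 : ℝ) : ℂ) :=
    fun z hz => hGconst z hz
  have hfne : ∀ z : ℂ, z ≠ 0 → f z ≠ 0 := by
    intro z hz hf0
    have h1 := hGval z hz
    rw [hf0, zero_mul] at h1
    have h2 : (M ^ 2 : ℝ) = 0 := by exact_mod_cast h1.symm
    exact hMne (by nlinarith [sq_nonneg M])
  have hfa0 : AnalyticAt ℂ f 0 := hfa 0 (Set.mem_univ 0)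
  have hne0 : ¬ ∀ᶠ z in 𝓝 (0 : ℂ), f z = 0 := by
    intro hev
    obtain ⟨z, hz1, hz2⟩ :=
      ((hev.filter_mono nhdsWithin_le_nhds).and
        (eventually_mem_nhdsWithin (s := {(0:ℂ)}ᶜ) (a := (0:ℂ)))).exists
    exact hfne z hz2 hz1
  obtain ⟨n, g, hg_an, hg0, hg_eq⟩ :=
    hfa0.exists_eventuallyEq_pow_smul_nonzero_iff.mpr hne0
  set u : ℂ → ℂ := fun z => if z = 0 then g 0 else f z / z ^ n with hudef
  have hu_eqg : u =ᶠ[𝓝 (0 : ℂ)] g := by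
    filter_upwards [hg_eq] with z hz
    by_cases h0 : z = 0
    · simp [hudef, h0]
    · simp only [hudef, if_neg h0]
      rw [hz]
      rw [sub_zero, smul_eq_mul]
      field_simp
  have hfu : ∀ z : ℂ, f z = z ^ n * u z := by
    intro z
    by_cases h0 : z = 0
    · subst h0
      have h1 := hg_eq.self_of_nhds
      rw [sub_zero, smul_eq_mul] at h1
      simpa [hudef] using h1
    · simp only [hudef, if_neg h0]
      field_simp
  have hu_diff : Differentiable ℂ u := by
    intro z
    by_cases h0 : z = 0
    · subst h0
      exact hg_an.differentiableAt.congr_of_eventuallyEq hu_eqg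
    · have hev : (fun w : ℂ => f w / w ^ n) =ᶠ[𝓝 z] u := by
        filter_upwards [eventually_ne_nhds h0] with w hw
        simp [hudef, if_neg hw]
      exact (((hf z).div (differentiableAt_pow n) (pow_ne_zero n h0)).congr_of_eventuallyEq
        hev.symm)
  have hu_ne : ∀ z : ℂ, u z ≠ 0 := by
    intro z
    by_cases h0 : z = 0
    · simpa [hudef, h0] using hg0
    · simp only [hudef, if_neg h0]
      exact div_ne_zero (hfne z h0) (pow_ne_zero n h0)
  have habs_f : ∀ z : ℂ, ‖f z‖ = ‖z‖ ^ n * ‖u z‖ := by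
    intro z
    rw [hfu z, norm_mul, norm_pow]
  have hkey : ∀ z : ℂ, z ≠ 0 →
      (r ^ 2) ^ n * (‖u z‖ *
        ‖u ((starRingEnd ℂ) ((r : ℂ) ^ 2 / z))‖) = M ^ 2 := by
    intro z hz
    have h2 := congrArg norm (hGval z hz)
    rw [norm_mul] at h2
    set w := (r : ℂ) ^ 2 / z with hw
    have h3 : ‖h w‖ = ‖f ((starRingEnd ℂ) w)‖ := by
      rw [hhdef]; exact Complex.norm_conj _
    have habsw : ‖(starRingEnd ℂ) w‖ = r ^ 2 / ‖z‖ := by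
      rw [Complex.norm_conj, hw, norm_div, norm_pow, Complex.norm_real, Real.norm_eq_abs, abs_of_pos hr]
    rw [h3, habs_f, habs_f ((starRingEnd ℂ) w), habsw, Complex.norm_real, Real.norm_eq_abs] at h2
    rw [_root_.abs_of_nonneg (sq_nonneg M), div_pow] at h2
    have hzpos : (0 : ℝ) < ‖z‖ := norm_pos_iff.mpr hz
    rw [← h2]
    field_simp
  -- minimum of |u| on closed ball r^2
  obtain ⟨p, hpB, hpmin⟩ := (isCompact_closedBall (0 : ℂ) (r ^ 2)).exists_isMinOn
    ⟨0, by simp [le_of_lt (by positivity : (0:ℝ) < r ^ 2)]⟩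
    ((continuous_norm.comp hu_diff.continuous).continuousOn)
  set m : ℝ := ‖u p‖ with hmdef
  have hm : 0 < m := norm_pos_iff.mpr (hu_ne p)
  obtain ⟨C₁, hC₁⟩ := (isCompact_closedBall (0 : ℂ) 1).exists_bound_of_continuousOn
    hu_diff.continuous.continuousOn
  have hbound : ∀ z : ℂ, ‖u z‖ ≤ max C₁ (M ^ 2 / ((r ^ 2) ^ n * m)) := by
    intro z
    by_cases hz1 : ‖z‖ ≤ 1
    · refine le_trans ?_ (le_max_left _ _)
      have := hC₁ z (by simpa [Complex.dist_eq] using hz1)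
      simpa using this
    · push_neg at hz1
      refine le_trans ?_ (le_max_right _ _)
      have hz0 : z ≠ 0 := by
        intro h0; rw [h0, norm_zero] at hz1; linarith
      set cw := (starRingEnd ℂ) ((r : ℂ) ^ 2 / z) with hcw
      have hcwB : cw ∈ Metric.closedBall (0 : ℂ) (r ^ 2) := by
        have : ‖cw‖ = r ^ 2 / ‖z‖ := by
          rw [hcw, Complex.norm_conj, norm_div, norm_pow, Complex.norm_real, Real.norm_eq_abs, abs_of_pos hr]
        rw [Metric.mem_closedBall, Complex.dist_eq, sub_zero, this]
        calc r ^ 2 / ‖z‖ ≤ r ^ 2 / 1 := by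
              apply div_le_div_of_nonneg_left (by positivity) one_pos hz1.le
          _ = r ^ 2 := by ring
      have hmle : m ≤ ‖u cw‖ := hpmin hcwB
      have hk := hkey z hz0
      rw [← hcw] at hk
      have hrn : (0 : ℝ) < (r ^ 2) ^ n := by positivity
      rw [le_div_iff₀ (by positivity)]
      calc ‖u z‖ * ((r ^ 2) ^ n * m)
          ≤ ‖u z‖ * ((r ^ 2) ^ n * ‖u cw‖) := by
            apply mul_le_mul_of_nonneg_left _ (norm_nonneg _)
            exact mul_le_mul_of_nonneg_left hmle hrn.le
        _ = M ^ 2 := by rw [← hk]; ring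
  have hubdd : Bornology.IsBounded (Set.range u) := by
    rw [Metric.isBounded_iff_subset_closedBall 0]
    refine ⟨max C₁ (M ^ 2 / ((r ^ 2) ^ n * m)), ?_⟩
    rintro x ⟨z, rfl⟩
    rw [Metric.mem_closedBall, Complex.dist_eq, sub_zero]
    exact hbound z
  have huconst : ∀ z : ℂ, u z = u 0 := fun z =>
    hu_diff.apply_eq_apply_of_bounded hubdd z 0
  apply hmon
  refine ⟨u 0, n, funext fun z => ?_⟩
  rw [hfu z, huconst z, mul_comm]
end
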